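/- arXiv:2209.06033 — 4 statements merged into one kernel-verified Lean document; each statement's English description precedes it below -/
import Mathlib

section
/- Let A be a real n×n matrix. Then A is semi-simple (diagonalizable over ℂ) if and only if exp(A) is semi-simple. -/
open Matrix
open Matrix Polynomial

lemma aeval_units_conj {R A : Type*} [CommSemiring R] [Semiring A] [Algebra R A]
    (u : Aˣ) (x : A) (q : R[X]) :
    aeval ((u : A) * x * ↑u⁻¹) q = u * aeval x q * ↑u⁻¹ := by
  induction q using Polynomial.induction_on' with
  | add p r hp hr => simp [hp, hr, mul_add, add_mul]
  | monomial k a =>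
      rw [aeval_monomial, aeval_monomial, Units.conj_pow]
      rw [← Algebra.smul_def, ← Algebra.smul_def, mul_smul_comm, smul_mul_assoc]

lemma isSemisimple_toLin_of_diag {n : ℕ} (B P : Matrix (Fin n) (Fin n) ℂ)
    (d : Fin n → ℂ) (hP : IsUnit P.det) (hB : B = P * Matrix.diagonal d * P⁻¹) :
    Module.End.IsSemisimple (Matrix.toLinAlgEquiv' B : Module.End ℂ (Fin n → ℂ)) := by
  classical
  set s : Finset ℂ := Finset.image d Finset.univ with hs
  set q : ℂ[X] := ∏ c ∈ s, (X - C c) with hqdef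
  have hq : Squarefree q := by
    have : (∏ c ∈ s, (X - C (id c))).Separable :=
      Polynomial.separable_prod_X_sub_C_iff'.mpr fun x _ y _ h => h
    simpa [hqdef] using this.squarefree
  have hPu : IsUnit P := (Matrix.isUnit_iff_isUnit_det _).mpr hP
  have hdiag : aeval (Matrix.diagonal d) q = 0 := by
    have h1 : Matrix.diagonal d = Matrix.diagonalAlgHom ℂ d := rfl
    rw [h1, aeval_algHom_apply]
    have h2 : aeval d q = 0 := by
      funext i
      rw [Polynomial.aeval_fn_apply, Pi.zero_apply, aeval_def, ← eval_map, Polynomial.map_prod,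
        Polynomial.eval_prod]
      refine Finset.prod_eq_zero (Finset.mem_image_of_mem d (Finset.mem_univ i)) ?_
      simp
    rw [h2, map_zero]
  have hBq : aeval B q = 0 := by
    have hPinv : P⁻¹ = ↑hPu.unit⁻¹ := by
      rw [Matrix.coe_units_inv, IsUnit.unit_spec]
    have hB' : B = (hPu.unit : Matrix (Fin n) (Fin n) ℂ) * Matrix.diagonal d *
        ((hPu.unit⁻¹ : (Matrix (Fin n) (Fin n) ℂ)ˣ) : Matrix (Fin n) (Fin n) ℂ) := by
      rw [hPu.unit_spec, ← hPinv]; exact hB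
    rw [hB', aeval_units_conj, hdiag, mul_zero, zero_mul]
  apply Module.End.isSemisimple_of_squarefree_aeval_eq_zero hq
  rw [show (Matrix.toLinAlgEquiv' B : Module.End ℂ (Fin n → ℂ))
      = Matrix.toLinAlgEquiv'.toAlgHom B from rfl, aeval_algHom_apply, hBq, map_zero]


lemma exists_diag_of_isSemisimple {n : ℕ} (B : Matrix (Fin n) (Fin n) ℂ)
    (h : Module.End.IsSemisimple (Matrix.toLinAlgEquiv' B : Module.End ℂ (Fin n → ℂ))) :
    ∃ (P : Matrix (Fin n) (Fin n) ℂ) (d : Fin n → ℂ),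
      IsUnit P.det ∧ B = P * Matrix.diagonal d * P⁻¹ := by
  classical
  set f : Module.End ℂ (Fin n → ℂ) := Matrix.toLinAlgEquiv' B with hfdef
  have hsup : ⨆ μ : ℂ, f.eigenspace μ = ⊤ := by
    have h1 := Module.End.iSup_maxGenEigenspace_eq_top f
    have h2 := fun μ : ℂ => h.isFinitelySemisimple.maxGenEigenspace_eq_eigenspace μ
    simp_rw [h2] at h1
    exact h1
  set s : Finset ℂ := (minpoly ℂ f).roots.toFinset with hs
  have hbot : ∀ μ : ℂ, μ ∉ s → f.eigenspace μ = ⊥ := by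
    intro μ hμ
    by_contra hne
    have : f.HasEigenvalue μ := Module.End.hasEigenvalue_iff.mpr hne
    have hroot := Module.End.hasEigenvalue_iff_isRoot.mp this
    exact hμ (Multiset.mem_toFinset.mpr
      (Polynomial.mem_roots'.mpr ⟨minpoly.ne_zero_of_finite ℂ f, hroot⟩))
  have hsup' : ⨆ μ : {x // x ∈ s}, f.eigenspace ↑μ = ⊤ := by
    rw [← top_le_iff, ← hsup]
    refine iSup_le fun μ => ?_
    by_cases hμ : μ ∈ s
    · exact le_iSup_of_le ⟨μ, hμ⟩ le_rfl
    · rw [hbot μ hμ]; exact bot_le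
  have hindep : iSupIndep fun μ : {x // x ∈ s} => f.eigenspace ↑μ :=
    f.eigenspaces_iSupIndep.comp Subtype.coe_injective
  have hint : DirectSum.IsInternal fun μ : {x // x ∈ s} => f.eigenspace ↑μ :=
    (DirectSum.isInternal_submodule_iff_iSupIndep_and_iSup_eq_top _).mpr ⟨hindep, hsup'⟩
  let bases := fun μ : {x // x ∈ s} => Module.Free.chooseBasis ℂ (f.eigenspace ↑μ)
  let b0 := hint.collectedBasis bases
  have hcard : Fintype.card (Σ μ : {x // x ∈ s}, Module.Free.ChooseBasisIndex ℂ (f.eigenspace ↑μ)) = n := by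
    have := Module.finrank_eq_card_basis b0
    rw [Module.finrank_fin_fun ℂ] at this
    exact this.symm
  let e := Fintype.equivFinOfCardEq hcard
  let b := b0.reindex e
  let d : Fin n → ℂ := fun i => ↑(e.symm i).1
  have heig : ∀ i, f (b i) = d i • b i := by
    intro i
    have hmem : b0 (e.symm i) ∈ f.eigenspace ↑(e.symm i).1 :=
      hint.collectedBasis_mem bases (e.symm i)
    have := Module.End.mem_eigenspace_iff.mp hmem
    simpa [b, Module.Basis.reindex_apply, d] using this
  refine ⟨(Pi.basisFun ℂ (Fin n)).toMatrix ⇑b, d, ?_, ?_⟩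
  · have : Invertible (((Pi.basisFun ℂ (Fin n)).toMatrix ⇑b)) :=
      (Pi.basisFun ℂ (Fin n)).invertibleToMatrix b
    exact isUnit_det_of_invertible _
  · set P := (Pi.basisFun ℂ (Fin n)).toMatrix ⇑b with hPdef
    have hPentry : ∀ i j, P i j = b j i := by
      intro i j
      rw [hPdef, Module.Basis.toMatrix_apply, Pi.basisFun_repr]
    have hdet : IsUnit P.det := by
      have : Invertible P := (Pi.basisFun ℂ (Fin n)).invertibleToMatrix b
      exact isUnit_det_of_invertible _
    have hBP : B * P = P * Matrix.diagonal d := by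
      ext i j
      rw [Matrix.mul_apply, Matrix.mul_diagonal, hPentry]
      have : ∑ k, B i k * P k j = (B.mulVec ((b j))) i := by
        rw [Matrix.mulVec]
        simp only [dotProduct, hPentry]
      rw [this]
      have : B.mulVec ((b j)) = f (b j) := rfl
      rw [this, heig j, Pi.smul_apply, smul_eq_mul, mul_comm]
    calc B = B * (P * P⁻¹) := by rw [Matrix.mul_nonsing_inv _ hdet, mul_one]
    _ = B * P * P⁻¹ := by rw [mul_assoc]
    _ = P * Matrix.diagonal d * P⁻¹ := by rw [hBP]

lemma map_exp_ofReal {n : ℕ} (A : Matrix (Fin n) (Fin n) ℝ) :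
    (NormedSpace.exp A).map (fun x => (x : ℂ)) =
      NormedSpace.exp (A.map (fun x => (x : ℂ))) := by
  letI : SeminormedRing (Matrix (Fin n) (Fin n) ℝ) := Matrix.linftyOpSemiNormedRing
  letI : NormedRing (Matrix (Fin n) (Fin n) ℝ) := Matrix.linftyOpNormedRing
  letI : NormedAlgebra ℝ (Matrix (Fin n) (Fin n) ℝ) := Matrix.linftyOpNormedAlgebra
  letI : SeminormedRing (Matrix (Fin n) (Fin n) ℂ) := Matrix.linftyOpSemiNormedRing
  letI : NormedRing (Matrix (Fin n) (Fin n) ℂ) := Matrix.linftyOpNormedRing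
  letI : NormedAlgebra ℝ (Matrix (Fin n) (Fin n) ℂ) := Matrix.linftyOpNormedAlgebra
  letI : NormedAlgebra ℚ (Matrix (Fin n) (Fin n) ℝ) := Matrix.linftyOpNormedAlgebra
  letI : NormedAlgebra ℚ (Matrix (Fin n) (Fin n) ℂ) := Matrix.linftyOpNormedAlgebra
  have h1 := NormedSpace.map_exp ((Complex.ofRealHom : ℝ →+* ℂ).mapMatrix :
      Matrix (Fin n) (Fin n) ℝ →+* Matrix (Fin n) (Fin n) ℂ) ?_ A
  · have h2 : ∀ M : Matrix (Fin n) (Fin n) ℝ,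
        (Complex.ofRealHom : ℝ →+* ℂ).mapMatrix M = M.map (fun x => (x : ℂ)) := fun M => rfl
    exact h1
  · have : Continuous fun M : Matrix (Fin n) (Fin n) ℝ => M.map (fun x => (x : ℂ)) :=
      Continuous.matrix_map continuous_id Complex.continuous_ofReal
    exact this

lemma exp_nilpotent_factor {n : ℕ} (N : Matrix (Fin n) (Fin n) ℂ) (h : IsNilpotent N) :
    ∃ u : Matrix (Fin n) (Fin n) ℂ, Commute N u ∧ IsUnit u ∧
      NormedSpace.exp N - 1 = N * u := by
  classical
  obtain ⟨m, hm⟩ := h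
  have hm1 : N ^ (m + 1) = 0 := by rw [pow_succ, hm, zero_mul]
  have hm' : ∀ k, m + 1 ≤ k → N ^ k = 0 := fun k hk => pow_eq_zero_of_le hk hm1
  have hexp : NormedSpace.exp N = ∑ k ∈ Finset.range (m + 2), (k.factorial : ℂ)⁻¹ • N ^ k := by
    rw [NormedSpace.exp_eq_tsum ℂ]
    refine tsum_eq_sum fun k hk => ?_
    rw [hm' k (le_trans (Nat.le_succ _) (by have := Finset.mem_range.not.mp hk; omega))]
    simp
  set u : Matrix (Fin n) (Fin n) ℂ :=
    ∑ k ∈ Finset.range (m + 1), ((k + 1).factorial : ℂ)⁻¹ • N ^ k with hu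
  have hcomm : Commute N u := Commute.sum_right _ _ _ fun k _ =>
    ((Commute.refl N).pow_right k).smul_right _
  have hNu : N * u = ∑ k ∈ Finset.range (m + 1), ((k + 1).factorial : ℂ)⁻¹ • N ^ (k + 1) := by
    rw [hu, Finset.mul_sum]
    refine Finset.sum_congr rfl fun k _ => ?_
    rw [mul_smul_comm, pow_succ']
  refine ⟨u, hcomm, ?_, ?_⟩
  · have hsplit : u = (∑ k ∈ Finset.range m, ((k + 1 + 1).factorial : ℂ)⁻¹ • N ^ (k + 1)) + 1 := by
      rw [hu, Finset.sum_range_succ' _ m]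
      norm_num
    have hnil : IsNilpotent (∑ k ∈ Finset.range m, ((k + 1 + 1).factorial : ℂ)⁻¹ • N ^ (k + 1)) := by
      have heq : (∑ k ∈ Finset.range m, ((k + 1 + 1).factorial : ℂ)⁻¹ • N ^ (k + 1))
          = N * ∑ k ∈ Finset.range m, ((k + 1 + 1).factorial : ℂ)⁻¹ • N ^ k := by
        rw [Finset.mul_sum]
        exact Finset.sum_congr rfl fun k _ => by rw [mul_smul_comm, pow_succ']
      rw [heq]
      exact Commute.isNilpotent_mul_right (Commute.sum_right _ _ _ fun k _ =>
        ((Commute.refl N).pow_right k).smul_right _) ⟨m, hm⟩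
    rw [hsplit]
    exact hnil.isUnit_add_one
  · rw [hexp, Finset.sum_range_succ' _ (m + 1), hNu]
    norm_num

open Matrix



/-- A real square matrix is semi-simple if it is diagonalizable over `ℂ`. -/
def Matrix.IsSemisimpleR {n : ℕ} (A : Matrix (Fin n) (Fin n) ℝ) : Prop :=
  ∃ (P : Matrix (Fin n) (Fin n) ℂ) (d : Fin n → ℂ),
    IsUnit P.det ∧ A.map (fun x => (x : ℂ)) = P * Matrix.diagonal d * P⁻¹

/-- A real matrix `A` is semi-simple if and only if `exp A` is semi-simple. -/
theorem isSemisimpleR_iff_exp_isSemisimpleR {n : ℕ} (A : Matrix (Fin n) (Fin n) ℝ) :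
    A.IsSemisimpleR ↔ (NormedSpace.exp A).IsSemisimpleR := by
  classical
  set C : Matrix (Fin n) (Fin n) ℂ := A.map (fun x => (x : ℂ)) with hC
  have hmap : (NormedSpace.exp A).map (fun x => (x : ℂ)) = NormedSpace.exp C :=
    map_exp_ofReal A
  constructor
  · rintro ⟨P, d, hP, hdiag⟩
    have hPu : IsUnit P := (Matrix.isUnit_iff_isUnit_det _).mpr hP
    refine ⟨P, NormedSpace.exp d, hP, ?_⟩
    rw [hmap, show C = P * Matrix.diagonal d * P⁻¹ from hdiag,
      Matrix.exp_conj P (Matrix.diagonal d) hPu, Matrix.exp_diagonal]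
  · rintro ⟨Q, ev, hQ, hEdiag0⟩
    letI : SeminormedRing (Matrix (Fin n) (Fin n) ℂ) := Matrix.linftyOpSemiNormedRing
    letI : NormedRing (Matrix (Fin n) (Fin n) ℂ) := Matrix.linftyOpNormedRing
    letI : NormedAlgebra ℂ (Matrix (Fin n) (Fin n) ℂ) := Matrix.linftyOpNormedAlgebra
    have hEdiag : NormedSpace.exp C = Q * Matrix.diagonal ev * Q⁻¹ := by
      rw [← hmap]; exact hEdiag0
    set φ := (Matrix.toLinAlgEquiv' :
      Matrix (Fin n) (Fin n) ℂ ≃ₐ[ℂ] Module.End ℂ (Fin n → ℂ)) with hφ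
    obtain ⟨nn, hnmem, ss, hsmem, hnil, hss, hsum⟩ :=
      Module.End.exists_isNilpotent_isSemisimple (f := φ C)
    set N := φ.symm nn with hN
    set S := φ.symm ss with hS
    have hφN : φ N = nn := φ.apply_symm_apply nn
    have hφS : φ S = ss := φ.apply_symm_apply ss
    have hCNS : C = N + S := by
      apply φ.injective
      rw [map_add, hφN, hφS, hsum]
    have hcommEnd : Commute nn ss := by
      have h1 : Commute nn (φ C) :=
        (Algebra.commute_of_mem_adjoin_self hnmem).symm
      exact Algebra.commute_of_mem_adjoin_singleton_of_commute hsmem h1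
    have hcommSN : Commute S N := by
      have h1 : S * N = φ.symm (ss * nn) := by rw [_root_.map_mul]
      rw [Commute, SemiconjBy, h1, ← hcommEnd.eq, _root_.map_mul]
    have hNnil : IsNilpotent N := by
      obtain ⟨k, hk⟩ := hnil
      exact ⟨k, by rw [hN, ← _root_.map_pow, hk, map_zero]⟩
    -- exp C is semisimple as an endomorphism
    have hECss : Module.End.IsSemisimple (φ (NormedSpace.exp C)) :=
      isSemisimple_toLin_of_diag _ Q ev hQ hEdiag
    -- S is semisimple, hence exp S is diagonalizable hence semisimple
    have hSss : Module.End.IsSemisimple (φ S) := by rw [hφS]; exact hss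
    obtain ⟨Ps, ds, hPs, hSdiag⟩ := exists_diag_of_isSemisimple S hSss
    have hPsU : IsUnit Ps := (Matrix.isUnit_iff_isUnit_det _).mpr hPs
    have hexpS : NormedSpace.exp S = Ps * Matrix.diagonal (NormedSpace.exp ds) * Ps⁻¹ := by
      rw [hSdiag, Matrix.exp_conj Ps (Matrix.diagonal ds) hPsU, Matrix.exp_diagonal]
    have hexpSss : Module.End.IsSemisimple (φ (NormedSpace.exp S)) :=
      isSemisimple_toLin_of_diag _ Ps _ hPs hexpS
    -- factor exp C
    have hCexp : NormedSpace.exp C = NormedSpace.exp S * NormedSpace.exp N := by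
      rw [hCNS, show N + S = S + N from (add_comm _ _), Matrix.exp_add_of_commute S N hcommSN]
    obtain ⟨u, hNu, huU, hfac⟩ := exp_nilpotent_factor N hNnil
    have hexpN1nil : IsNilpotent (NormedSpace.exp N - 1) := by
      rw [hfac]; exact Commute.isNilpotent_mul_right hNu hNnil
    have hcommexp : Commute (NormedSpace.exp S) (NormedSpace.exp N) := hcommSN.exp
    set W := NormedSpace.exp S * (NormedSpace.exp N - 1) with hW
    have hW1 : NormedSpace.exp C - NormedSpace.exp S = W := by
      rw [hCexp, hW, mul_sub, mul_one]
    have hWnil : IsNilpotent W := by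
      rw [hW]
      exact Commute.isNilpotent_mul_left (hcommexp.sub_right (Commute.one_right _)) hexpN1nil
    have hcommCE : Commute (NormedSpace.exp C) (NormedSpace.exp S) := by
      rw [hCexp]
      exact Commute.mul_left (Commute.refl _) hcommexp.symm
    have hcommEndE : Commute (φ (NormedSpace.exp C)) (φ (NormedSpace.exp S)) := by
      rw [Commute, SemiconjBy, ← _root_.map_mul, ← _root_.map_mul, hcommCE.eq]
    have hWend_ss : Module.End.IsSemisimple (φ W) := by
      have := Module.End.IsSemisimple.sub_of_commute hcommEndE hECss hexpSss
      rwa [← map_sub, hW1] at this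
    have hWend_nil : IsNilpotent (φ W) := by
      obtain ⟨k, hk⟩ := hWnil
      exact ⟨k, by rw [← _root_.map_pow, hk, map_zero]⟩
    have hW0 : W = 0 := by
      apply φ.injective
      rw [map_zero]
      exact Module.End.eq_zero_of_isNilpotent_isSemisimple hWend_nil hWend_ss
    have hexpS_unit : IsUnit (NormedSpace.exp S) := Matrix.isUnit_exp S
    have hexpN1 : NormedSpace.exp N - 1 = 0 := by
      apply hexpS_unit.mul_left_cancel
      rw [mul_zero, ← hW, hW0]
    have hN0 : N = 0 := by
      apply huU.mul_right_cancel
      rw [zero_mul, ← hfac, hexpN1]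
    have hCS : C = S := by rw [hCNS, hN0, zero_add]
    have hCss : Module.End.IsSemisimple (φ C) := by rw [hCS, hφS]; exact hss
    obtain ⟨P, d, hP, hdiag⟩ := exists_diag_of_isSemisimple C hCss
    exact ⟨P, d, hP, hdiag⟩
end

section
/- Let A = S + N be a real n×n matrix with S semi-simple, N nilpotent, and SN = NS. If exp(A) is semi-simple, then N = 0. -/
open Matrix Polynomial

section Aux

variable {n : ℕ}

private lemma aux_aeval_units_conj {A : Type*} [Ring A] [Algebra ℂ A]
    (u : Aˣ) (x : A) (p : ℂ[X]) :
    aeval ((u : A) * x * (↑u⁻¹ : A)) p = (u : A) * aeval x p * (↑u⁻¹ : A) := by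
  induction p using Polynomial.induction_on' with
  | add p q hp hq => simp [hp, hq, mul_add, add_mul]
  | monomial k a =>
      simp only [aeval_monomial, Units.conj_pow]
      calc (algebraMap ℂ A) a * ((u : A) * x ^ k * (↑u⁻¹ : A))
          = (algebraMap ℂ A) a * (u : A) * x ^ k * (↑u⁻¹ : A) := by simp [mul_assoc]
        _ = (u : A) * (algebraMap ℂ A) a * x ^ k * (↑u⁻¹ : A) := by rw [Algebra.commutes]
        _ = (u : A) * ((algebraMap ℂ A) a * x ^ k) * (↑u⁻¹ : A) := by rw [mul_assoc (u : A)]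

/-- A diagonalizable complex matrix gives a semisimple endomorphism. -/
private lemma aux_isSemisimple_of_diag {M P : Matrix (Fin n) (Fin n) ℂ} {d : Fin n → ℂ}
    (hP : IsUnit P.det) (hM : M = P * Matrix.diagonal d * P⁻¹) :
    Module.End.IsSemisimple (Matrix.toLinAlgEquiv' M) := by
  classical
  set t : Finset ℂ := Finset.image d Finset.univ with ht
  set p : ℂ[X] := ∏ c ∈ t, (X - C c) with hp
  have hsq : Squarefree p :=
    (Polynomial.separable_prod_X_sub_C_iff'.mpr (fun x _ y _ h => h)).squarefree
  apply Module.End.isSemisimple_of_squarefree_aeval_eq_zero hsq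
  obtain ⟨u, hu⟩ := (Matrix.isUnit_iff_isUnit_det P).mpr hP
  have hD : aeval (Matrix.diagonal d) p = 0 := by
    have h1 : aeval (Matrix.diagonalAlgHom (n := Fin n) (α := ℂ) ℂ d) p
        = Matrix.diagonalAlgHom (n := Fin n) (α := ℂ) ℂ (aeval d p) :=
      Polynomial.aeval_algHom_apply _ d p
    have h2 : aeval d p = 0 := by
      funext i
      have h3 : aeval ((Pi.evalAlgHom ℂ (fun _ : Fin n => ℂ) i) d) p
          = (Pi.evalAlgHom ℂ (fun _ : Fin n => ℂ) i) (aeval d p) :=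
        Polynomial.aeval_algHom_apply _ d p
      have h4 : aeval (d i) p = (aeval d p) i := h3
      have h5 : aeval (d i) p = 0 := by
        rw [hp]
        simp only [map_prod, map_sub, aeval_X, aeval_C]
        refine Finset.prod_eq_zero (i := d i) ?_ ?_
        · exact Finset.mem_image_of_mem d (Finset.mem_univ i)
        · simp [Algebra.algebraMap_self]
      rw [← h4, h5]; rfl
    have h1' : aeval (Matrix.diagonal d) p = Matrix.diagonal (aeval d p) := by
      simpa using h1
    rw [h1', h2]
    ext i j
    simp [Matrix.diagonal_apply]
  have hM' : M = (u : Matrix (Fin n) (Fin n) ℂ) * Matrix.diagonal d * (↑u⁻¹ : Matrix (Fin n) (Fin n) ℂ) := by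
    rw [hM, ← hu, ← Matrix.coe_units_inv]
  have h0 : aeval M p = 0 := by
    rw [hM', aux_aeval_units_conj, hD, mul_zero, zero_mul]
  rw [Polynomial.aeval_algEquiv]
  simp [h0]

private lemma aux_map_exp {n : ℕ} (c : Matrix (Fin n) (Fin n) ℝ →ₐ[ℝ] Matrix (Fin n) (Fin n) ℂ)
    (hc : Continuous c) (A : Matrix (Fin n) (Fin n) ℝ) :
    c (NormedSpace.exp A) = NormedSpace.exp (c A) := by
  letI : SeminormedRing (Matrix (Fin n) (Fin n) ℂ) := Matrix.linftyOpSemiNormedRing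
  letI : NormedRing (Matrix (Fin n) (Fin n) ℂ) := Matrix.linftyOpNormedRing
  letI : NormedAlgebra ℝ (Matrix (Fin n) (Fin n) ℂ) := Matrix.linftyOpNormedAlgebra
  letI : SeminormedRing (Matrix (Fin n) (Fin n) ℝ) := Matrix.linftyOpSemiNormedRing
  letI : NormedRing (Matrix (Fin n) (Fin n) ℝ) := Matrix.linftyOpNormedRing
  letI : NormedAlgebra ℝ (Matrix (Fin n) (Fin n) ℝ) := Matrix.linftyOpNormedAlgebra
  letI : NormedAlgebra ℚ (Matrix (Fin n) (Fin n) ℝ) :=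
    NormedAlgebra.restrictScalars ℚ ℝ (Matrix (Fin n) (Fin n) ℝ)
  exact NormedSpace.map_exp c hc A

private lemma aux_commute_exp_left {n : ℕ} {X Y : Matrix (Fin n) (Fin n) ℂ}
    (h : Commute X Y) : Commute (NormedSpace.exp X) Y := by
  letI : SeminormedRing (Matrix (Fin n) (Fin n) ℂ) := Matrix.linftyOpSemiNormedRing
  letI : NormedRing (Matrix (Fin n) (Fin n) ℂ) := Matrix.linftyOpNormedRing
  letI : NormedAlgebra ℝ (Matrix (Fin n) (Fin n) ℂ) := Matrix.linftyOpNormedAlgebra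
  exact h.exp_left

private lemma aux_commute_exp {n : ℕ} {X Y : Matrix (Fin n) (Fin n) ℂ}
    (h : Commute X Y) : Commute (NormedSpace.exp X) (NormedSpace.exp Y) := by
  letI : SeminormedRing (Matrix (Fin n) (Fin n) ℂ) := Matrix.linftyOpSemiNormedRing
  letI : NormedRing (Matrix (Fin n) (Fin n) ℂ) := Matrix.linftyOpNormedRing
  letI : NormedAlgebra ℝ (Matrix (Fin n) (Fin n) ℂ) := Matrix.linftyOpNormedAlgebra
  exact h.exp

end Aux

open Matrix

set_option maxHeartbeats 1000000 in
/-- If `A = S + N` with `S` semi-simple, `N` nilpotent, `SN = NS`, and `exp A` is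
semi-simple, then `N = 0`. -/
theorem nilpotent_part_eq_zero_of_exp_isSemisimpleR {n : ℕ}
    (A S N : Matrix (Fin n) (Fin n) ℝ)
    (hA : A = S + N) (hS : S.IsSemisimpleR) (hN : IsNilpotent N)
    (hcomm : S * N = N * S)
    (hexp : (NormedSpace.exp A).IsSemisimpleR) :
    N = 0 := by
  classical
  let c : Matrix (Fin n) (Fin n) ℝ →ₐ[ℝ] Matrix (Fin n) (Fin n) ℂ :=
    (Algebra.ofId ℝ ℂ).mapMatrix
  have hcmap : ∀ M : Matrix (Fin n) (Fin n) ℝ, c M = M.map (fun x => (x : ℂ)) := by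
    intro M; ext i j; simp [c, Algebra.ofId_apply]
  have hc : Continuous c := c.toLinearMap.continuous_of_finiteDimensional
  set S' := c S with hS'
  set N' := c N with hN'def
  have hcomm' : Commute S' N' := by
    show S' * N' = N' * S'
    rw [hS', hN'def, ← _root_.map_mul, ← _root_.map_mul, hcomm]
  have hN' : IsNilpotent N' := hN.map c
  obtain ⟨m, hm⟩ := hN'
  have hm1 : N' ^ (m + 1) = 0 := by rw [pow_succ, hm, zero_mul]
  -- exp over ℂ
  have hexpA : (NormedSpace.exp A).map (fun x => (x : ℂ)) = NormedSpace.exp (c A) := by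
    rw [← hcmap]; exact aux_map_exp c hc A
  have hsplit : NormedSpace.exp (c A) = NormedSpace.exp S' * NormedSpace.exp N' := by
    rw [hA, map_add, ← hS', ← hN'def]
    exact Matrix.exp_add_of_commute _ _ hcomm'
  -- exp N' = N' * u + 1 with u a unit
  set u : Matrix (Fin n) (Fin n) ℂ :=
    ∑ k ∈ Finset.range (m + 1), (((k + 1).factorial : ℝ))⁻¹ • N' ^ k with hu
  have hexpN : NormedSpace.exp N' = N' * u + 1 := by
    simp only [NormedSpace.exp_eq_tsum ℝ]
    rw [tsum_eq_sum (s := Finset.range (m + 2)) ?van]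
    case van =>
      intro k hk
      have hk' : m + 1 ≤ k := by
        have : ¬ k < m + 2 := fun h => hk (Finset.mem_range.mpr h)
        omega
      rw [pow_eq_zero_of_le hk' hm1, smul_zero]
    rw [Finset.sum_range_succ']
    simp only [pow_zero, Nat.factorial_zero, Nat.cast_one, inv_one, one_smul]
    congr 1
    rw [hu, Finset.mul_sum]
    refine Finset.sum_congr rfl fun k _ => ?_
    rw [pow_succ']
    rw [mul_smul_comm]
  have hw : IsUnit u := by
    have : u = (∑ k ∈ Finset.range m, (((k + 2).factorial : ℝ))⁻¹ • N' ^ (k + 1)) + 1 := by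
      rw [hu, Finset.sum_range_succ']
      simp
    rw [this, add_comm]
    apply IsNilpotent.isUnit_one_add
    apply Commute.isNilpotent_sum
    · intro k _
      refine IsNilpotent.smul ?_ _
      exact ⟨m + 1, by rw [← pow_mul, pow_eq_zero_of_le (by nlinarith) hm1]⟩
    · intro i _ j _
      exact (((Commute.refl N').pow_pow _ _).smul_left _).smul_right _
  -- commutation facts
  have hSN : Commute (NormedSpace.exp S') N' := aux_commute_exp_left hcomm'
  have hSu : Commute (NormedSpace.exp S') u := by
    rw [hu]
    refine Commute.sum_right _ _ _ fun k _ => (hSN.pow_right k).smul_right _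
  have hNu : Commute N' u := by
    rw [hu]
    refine Commute.sum_right _ _ _ fun k _ => ((Commute.refl N').pow_right k).smul_right _
  -- the difference is nilpotent
  set D : Matrix (Fin n) (Fin n) ℂ :=
    NormedSpace.exp (c A) - NormedSpace.exp S' with hD
  have hDval : D = NormedSpace.exp S' * (N' * u) := by
    rw [hD, hsplit, hexpN, mul_add, mul_one, add_sub_cancel_right]
  have hDnil : IsNilpotent D := by
    rw [hDval]
    exact (hSN.mul_right hSu).isNilpotent_mul_left
      ((hNu.isNilpotent_mul_right ⟨m, hm⟩))
  -- semisimplicity of both exponentials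
  obtain ⟨P, d, hP, hPd⟩ := hexp
  have hsA : Module.End.IsSemisimple (Matrix.toLinAlgEquiv' (NormedSpace.exp (c A))) := by
    refine aux_isSemisimple_of_diag (d := d) hP ?_
    rw [← hexpA, hPd]
  obtain ⟨Q, e, hQ, hQe⟩ := hS
  have hsS : Module.End.IsSemisimple (Matrix.toLinAlgEquiv' (NormedSpace.exp S')) := by
    have hSconj : S' = Q * Matrix.diagonal e * Q⁻¹ := by rw [hS', hcmap]; exact hQe
    have : NormedSpace.exp S' = Q * Matrix.diagonal (NormedSpace.exp e) * Q⁻¹ := by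
      rw [hSconj, Matrix.exp_conj Q _ ((Matrix.isUnit_iff_isUnit_det Q).mpr hQ),
        Matrix.exp_diagonal]
    exact aux_isSemisimple_of_diag hQ this
  -- commuting semisimple endomorphisms: difference is semisimple
  have hcommAS : Commute (NormedSpace.exp (c A)) (NormedSpace.exp S') := by
    rw [hsplit]
    exact Commute.mul_left (Commute.refl _) (aux_commute_exp hcomm').symm
  have hcommE : Commute (Matrix.toLinAlgEquiv' (NormedSpace.exp (c A)))
      (Matrix.toLinAlgEquiv' (NormedSpace.exp S')) := hcommAS.map _
  have hsD : Module.End.IsSemisimple (Matrix.toLinAlgEquiv' D) := by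
    have := Module.End.IsSemisimple.sub_of_commute hcommE hsA hsS
    rwa [← map_sub, ← hD] at this
  have hnD : IsNilpotent (Matrix.toLinAlgEquiv' D) := hDnil.map _
  have hD0 : D = 0 := by
    have := Module.End.eq_zero_of_isNilpotent_isSemisimple hnD hsD
    have h0 : D = 0 := by simpa using this
    simpa using h0
  -- conclude N' = 0
  have hNu0 : N' * u = 0 := by
    have hUS : IsUnit (NormedSpace.exp S') := Matrix.isUnit_exp S'
    obtain ⟨v, hv⟩ := hUS
    have : (v : Matrix (Fin n) (Fin n) ℂ) * (N' * u) = 0 := by rw [hv, ← hDval, hD0]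
    calc N' * u = ↑v⁻¹ * (↑v * (N' * u)) := by rw [← mul_assoc, Units.inv_mul, one_mul]
    _ = 0 := by rw [this, mul_zero]
  have hN'0 : N' = 0 := by
    obtain ⟨w, hwu⟩ := hw
    calc N' = N' * u * ↑w⁻¹ := by rw [← hwu, mul_assoc, Units.mul_inv, mul_one]
    _ = 0 := by rw [hNu0, zero_mul]
  have hmap0 : N.map (fun x => (x : ℂ)) = 0 := by
    rw [← hcmap, ← hN'def]
    exact hN'0
  ext i j
  have := congrFun (congrFun hmap0 i) j
  simpa using this
end

section
/- Let 𝒥 be a real matrix and let ℒ = {Y ∈ M(n,ℝ) : exp(Y) = 𝒥_M and Y is similar to 𝒥}, where exp(𝒥) = 𝒥_M. Then ℒ is closed in GL(n,ℝ) (equivalently, in M(n,ℝ)): if a sequence Y_i ∈ ℒ converges to Y, then exp(Y) = 𝒥_M and Y has the same characteristic polynomial as 𝒥, and since all such Y with exp(Y) = 𝒥_M are semi-simple (𝒥_M being semi-simple), Y ∈ ℒ. -/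
set_option maxRecDepth 8000

open Matrix

section Aux

open NormedSpace Polynomial

variable {n : ℕ} {K : Type*} [Field K]


lemma eval_charpoly {R : Type*} [CommRing R] (A : Matrix (Fin n) (Fin n) R) (t : R) :
    (A.charpoly).eval t = ((t • 1 - A) : Matrix (Fin n) (Fin n) R).det := by
  have : (A.charpoly).eval t = ((evalRingHom t) A.charpoly) := rfl
  rw [this, Matrix.charpoly, RingHom.map_det]
  congr 1
  ext i j
  by_cases h : i = j <;>
    simp [h, charmatrix_apply, Matrix.one_apply, Matrix.sub_apply, Matrix.smul_apply]

lemma charpoly_conj {K : Type*} [Field K] [Infinite K] (A P : Matrix (Fin n) (Fin n) K)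
    (hP : IsUnit P.det) : (P * A * P⁻¹).charpoly = A.charpoly := by
  apply Polynomial.funext
  intro t
  rw [_root_.eval_charpoly, _root_.eval_charpoly]
  have h1 : (t • 1 - P * A * P⁻¹) = P * (t • 1 - A) * P⁻¹ := by
    rw [Matrix.mul_sub, Matrix.sub_mul]
    congr 1
    rw [Matrix.mul_smul, Matrix.mul_one, Matrix.smul_mul, Matrix.mul_nonsing_inv _ hP]
  rw [h1, Matrix.det_mul, Matrix.det_mul, Matrix.det_nonsing_inv]
  rw [mul_comm, ← mul_assoc, Ring.inverse_mul_cancel _ hP, one_mul]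

section ExpHelpers

lemma matrix_exp_continuous : Continuous (exp : Matrix (Fin n) (Fin n) ℝ → _) := by
  letI : SeminormedRing (Matrix (Fin n) (Fin n) ℝ) := Matrix.linftyOpSemiNormedRing
  letI : NormedRing (Matrix (Fin n) (Fin n) ℝ) := Matrix.linftyOpNormedRing
  letI : NormedAlgebra ℝ (Matrix (Fin n) (Fin n) ℝ) := Matrix.linftyOpNormedAlgebra
  letI : NormedAlgebra ℚ (Matrix (Fin n) (Fin n) ℝ) := Matrix.linftyOpNormedAlgebra
  exact exp_continuous

lemma matrix_exp_nilpotent_sum {N : Matrix (Fin n) (Fin n) ℂ} {m : ℕ} (h : N ^ m = 0) :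
    exp N = ∑ k ∈ Finset.range m, ((Nat.factorial k : ℕ) : ℂ)⁻¹ • N ^ k := by
  letI : SeminormedRing (Matrix (Fin n) (Fin n) ℂ) := Matrix.linftyOpSemiNormedRing
  letI : NormedRing (Matrix (Fin n) (Fin n) ℂ) := Matrix.linftyOpNormedRing
  letI : NormedAlgebra ℂ (Matrix (Fin n) (Fin n) ℂ) := Matrix.linftyOpNormedAlgebra
  rw [exp_eq_tsum ℂ]
  refine tsum_eq_sum (fun k hk => ?_)
  rw [Finset.mem_range, not_lt] at hk
  rw [pow_eq_zero_of_le hk h, smul_zero]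

/-- exp N - 1 = N * B with B commuting with N and invertible -/
lemma exists_exp_nilpotent_factor {N : Matrix (Fin n) (Fin n) ℂ} (hN : IsNilpotent N) :
    ∃ B : Matrix (Fin n) (Fin n) ℂ, Commute N B ∧ IsUnit B ∧ exp N - 1 = N * B := by
  obtain ⟨m, hm⟩ := hN
  have hm' : N ^ (m + 1) = 0 := by rw [pow_succ, hm, Matrix.zero_mul]
  refine ⟨∑ k ∈ Finset.range (m + 1), ((Nat.factorial (k+1) : ℕ) : ℂ)⁻¹ • N ^ k, ?_, ?_, ?_⟩
  · exact Commute.sum_right _ _ _ fun k _ => (Commute.pow_right rfl k).smul_right _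
  · -- B = 1 + nilpotent
    have hB : (∑ k ∈ Finset.range (m + 1), ((Nat.factorial (k+1) : ℕ) : ℂ)⁻¹ • N ^ k)
        = 1 + ∑ k ∈ Finset.range m, ((Nat.factorial (k+2) : ℕ) : ℂ)⁻¹ • N ^ (k + 1) := by
      rw [Finset.sum_range_succ', add_comm]
      congr 1
      · simp
    rw [hB]
    have hnil : IsNilpotent (∑ k ∈ Finset.range m, ((Nat.factorial (k+2) : ℕ) : ℂ)⁻¹ • N ^ (k + 1)) := by
      refine Commute.isNilpotent_sum (fun k _ => ?_) (fun i j _ _ => ?_)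
      · refine IsNilpotent.smul ?_ _
        exact ⟨m + 1, by rw [← pow_mul]; exact pow_eq_zero_of_le (by nlinarith) hm'⟩
      · exact ((Commute.pow_pow rfl _ _).smul_right _).smul_left _
    exact hnil.isUnit_one_add
  · rw [matrix_exp_nilpotent_sum hm', Finset.mul_sum, Finset.sum_range_succ',
      Finset.sum_range_succ]
    have hlast : N * (((Nat.factorial (m + 1) : ℕ) : ℂ)⁻¹ • N ^ m) = 0 := by
      rw [Matrix.mul_smul, ← pow_succ', hm', smul_zero]
    rw [hlast, add_zero]
    simp only [Nat.factorial_zero, Nat.cast_one, inv_one, pow_zero, one_smul,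
      add_sub_cancel_right]
    exact Finset.sum_congr rfl fun k _ => by rw [Matrix.mul_smul, ← pow_succ']
end ExpHelpers

/-- Conjugation by a unit as an algebra hom. -/
def innerAut {R A : Type*} [CommSemiring R] [Semiring A] [Algebra R A] (u : Aˣ) : A →ₐ[R] A where
  toFun x := ↑u * x * ↑u⁻¹
  map_one' := by simp
  map_mul' x y := by
    have h : (↑u⁻¹ : A) * ↑u = 1 := u.inv_mul
    calc ↑u * (x * y) * ↑u⁻¹ = ↑u * x * ((↑u⁻¹ * ↑u) * (y * ↑u⁻¹)) := by
          rw [h, one_mul]; noncomm_ring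
      _ = ↑u * x * ↑u⁻¹ * (↑u * y * ↑u⁻¹) := by noncomm_ring
  map_zero' := by simp
  map_add' x y := by simp [mul_add, add_mul]
  commutes' r := by
    simp only [Algebra.algebraMap_eq_smul_one]
    rw [mul_smul_comm, mul_one, smul_mul_assoc, Units.mul_inv]

lemma aeval_diagonal {K : Type*} [Field K] (d : Fin n → K) (p : Polynomial K) :
    (aeval (diagonal d)) p = diagonal (fun i => p.eval (d i)) := by
  induction p using Polynomial.induction_on' with
  | add p q hp hq => rw [map_add, hp, hq]; ext i j; by_cases h : i = j <;> simp [h]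
  | monomial k c =>
      rw [aeval_monomial, diagonal_pow]
      ext i j
      by_cases h : i = j <;>
        simp [h, eval_monomial, algebraMap_eq_diagonal, diagonal_mul_diagonal,
          Pi.algebraMap_apply]

/-- Diagonalizable complex matrix gives semisimple endomorphism. -/
lemma isSemisimple_of_diagonalizable (A : Matrix (Fin n) (Fin n) ℂ)
    (h : ∃ (P : Matrix (Fin n) (Fin n) ℂ) (d : Fin n → ℂ),
      IsUnit P.det ∧ A = P * diagonal d * P⁻¹) :
    Module.End.IsSemisimple (M := Fin n → ℂ) (Matrix.toLinAlgEquiv' A) := by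
  obtain ⟨P, d, hP, hA⟩ := h
  set p : Polynomial ℂ := ∏ μ ∈ Finset.univ.image d, (X - C μ) with hpdef
  have hsq : Squarefree p :=
    ((separable_prod_X_sub_C_iff' (f := id)).mpr (fun i _ j _ h => h)).squarefree
  have hPu : IsUnit P := (Matrix.isUnit_iff_isUnit_det _).mpr hP
  obtain ⟨u, rfl⟩ := hPu
  have haev : (aeval A) p = 0 := by
    have hconj : A = innerAut (R := ℂ) u (diagonal d) := by
      rw [hA]; simp only [innerAut, AlgHom.coe_mk, RingHom.coe_mk, MonoidHom.coe_mk,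
        OneHom.coe_mk, Matrix.coe_units_inv]
    rw [hconj, aeval_algHom_apply, aeval_diagonal]
    have hz : (fun i => p.eval (d i)) = fun _ => 0 := by
      funext i
      rw [hpdef, eval_prod]
      apply Finset.prod_eq_zero (Finset.mem_image_of_mem d (Finset.mem_univ i))
      simp
    rw [hz, diagonal_zero, map_zero]
  apply Module.End.isSemisimple_of_squarefree_aeval_eq_zero hsq
  have : (aeval (Matrix.toLinAlgEquiv' A)) p
      = Matrix.toLinAlgEquiv' ((aeval A) p) := by
    exact aeval_algHom_apply (Matrix.toLinAlgEquiv' : Matrix (Fin n) (Fin n) ℂ ≃ₐ[ℂ] _) A p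
  rw [this, haev, map_zero]

/-- A finitely semisimple endomorphism of ℂⁿ comes from a diagonalizable matrix. -/
lemma diagonalizable_of_isFinitelySemisimple (A : Matrix (Fin n) (Fin n) ℂ)
    (h : Module.End.IsFinitelySemisimple (M := Fin n → ℂ) (Matrix.toLinAlgEquiv' A)) :
    ∃ (P : Matrix (Fin n) (Fin n) ℂ) (d : Fin n → ℂ),
      IsUnit P.det ∧ A = P * diagonal d * P⁻¹ := by
  set f : Module.End ℂ (Fin n → ℂ) := Matrix.toLinAlgEquiv' A with hf
  have hsup : ⨆ μ, f.eigenspace μ = ⊤ := by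
    have h1 := Module.End.iSup_maxGenEigenspace_eq_top f
    have h2 : ∀ μ, f.maxGenEigenspace μ = f.eigenspace μ :=
      fun μ => h.maxGenEigenspace_eq_eigenspace μ
    simpa only [h2] using h1
  have hint : DirectSum.IsInternal f.eigenspace :=
    (DirectSum.isInternal_submodule_iff_iSupIndep_and_iSup_eq_top _).mpr
      ⟨f.eigenspaces_iSupIndep, hsup⟩
  -- collected basis of eigenvectors
  let bases : ∀ μ : ℂ, Module.Basis (Module.Free.ChooseBasisIndex ℂ (f.eigenspace μ)) ℂ
      (f.eigenspace μ) := fun μ => Module.Free.chooseBasis ℂ _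
  let b := hint.collectedBasis bases
  have hb_mem : ∀ a, b a ∈ f.eigenspace a.1 := fun a => hint.collectedBasis_mem bases a
  let e := b.indexEquiv (Pi.basisFun ℂ (Fin n))
  let b' := b.reindex e
  let d : Fin n → ℂ := fun i => (e.symm i).1
  have hb' : ∀ i, f (b' i) = d i • b' i := by
    intro i
    have := hb_mem (e.symm i)
    rw [Module.End.mem_eigenspace_iff] at this
    simpa [b', Module.Basis.reindex_apply] using this
  -- the change of basis matrix
  let P : Matrix (Fin n) (Fin n) ℂ := (Pi.basisFun ℂ (Fin n)).toMatrix b'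
  haveI := Module.Basis.invertibleToMatrix (Pi.basisFun ℂ (Fin n)) b'
  have hPu : IsUnit P := isUnit_of_invertible P
  have hP : IsUnit P.det := (Matrix.isUnit_iff_isUnit_det _).mp hPu
  refine ⟨P, d, hP, ?_⟩
  have hPap : ∀ r c, P r c = b' c r := by
    intro r c
    simp [P, Module.Basis.toMatrix_apply, Pi.basisFun_repr]
  have key : A * P = P * diagonal d := by
    ext r c
    have h1 : (A * P) r c = (f (b' c)) r := by
      rw [hf]
      simp only [Matrix.toLinAlgEquiv'_apply, Matrix.mul_apply, Matrix.mulVec, dotProduct]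
      exact Finset.sum_congr rfl fun k _ => by rw [hPap]
    rw [h1, hb' c, Matrix.mul_diagonal, hPap]
    rw [Pi.smul_apply, smul_eq_mul, mul_comm]
  calc A = A * P * P⁻¹ := by
        rw [Matrix.mul_assoc, Matrix.mul_nonsing_inv _ hP, Matrix.mul_one]
    _ = P * diagonal d * P⁻¹ := by rw [key]

lemma exists_perm_of_multiset_map_eq {α : Type*} [DecidableEq α] {f g : Fin n → α}
    (h : Multiset.map f Finset.univ.val = Multiset.map g Finset.univ.val) :
    ∃ σ : Equiv.Perm (Fin n), f ∘ σ = g := by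
  have hcard : ∀ a : α, Fintype.card {i // f i = a} = Fintype.card {i // g i = a} := by
    intro a
    have hc : ∀ (F : Fin n → α), Fintype.card {i // F i = a}
        = Multiset.count a (Multiset.map F Finset.univ.val) := by
      intro F
      rw [Multiset.count_map, Fintype.card_subtype, Finset.card_def, Finset.filter_val]
      exact congrArg Multiset.card (Multiset.filter_congr (fun x _ => eq_comm))
    rw [hc f, hc g, h]
  let E : ∀ a : α, {i // g i = a} ≃ {i // f i = a} := fun a =>
    Fintype.equivOfCardEq (hcard a).symm
  let σ : Fin n ≃ Fin n :=
    (Equiv.sigmaFiberEquiv g).symm.trans ((Equiv.sigmaCongrRight E).trans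
      (Equiv.sigmaFiberEquiv f))
  refine ⟨σ, funext fun i => ?_⟩
  show f (σ i) = g i
  have hσ : σ i = ↑(E (g i) ⟨i, rfl⟩) := rfl
  rw [hσ]
  exact (E (g i) ⟨i, rfl⟩).2

lemma diagonal_perm_similar (d : Fin n → ℂ) (σ : Equiv.Perm (Fin n)) :
    ∃ R : Matrix (Fin n) (Fin n) ℂ, IsUnit R.det ∧
      diagonal (d ∘ σ) = R * diagonal d * R⁻¹ := by
  classical
  let R : Matrix (Fin n) (Fin n) ℂ := σ.toPEquiv.toMatrix
  have hdet : R.det = (Equiv.Perm.sign σ : ℂ) := Matrix.det_permutation σ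
  have hR : IsUnit R.det := by
    rw [hdet]
    rcases Int.units_eq_one_or (Equiv.Perm.sign σ) with h | h <;> simp [h]
  have key : R * diagonal d = diagonal (d ∘ σ) * R := by
    ext i j
    rw [Matrix.mul_diagonal, Matrix.diagonal_mul]
    simp only [R, PEquiv.toMatrix_apply, Equiv.toPEquiv_apply, Option.mem_def,
      Option.some.injEq, Function.comp_apply]
    by_cases h : σ i = j
    · subst h; simp
    · simp [Ne.symm h, h]
  refine ⟨R, hR, ?_⟩
  calc diagonal (d ∘ σ) = diagonal (d ∘ σ) * R * R⁻¹ := by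
        rw [Matrix.mul_assoc, Matrix.mul_nonsing_inv _ hR, Matrix.mul_one]
    _ = R * diagonal d * R⁻¹ := by rw [← key]

def MSim (A B : Matrix (Fin n) (Fin n) K) : Prop :=
  ∃ P : Matrix (Fin n) (Fin n) K, IsUnit P.det ∧ A = P * B * P⁻¹

lemma MSim.refl (A : Matrix (Fin n) (Fin n) K) : MSim A A :=
  ⟨1, by simp, by simp⟩

lemma MSim.symm {A B : Matrix (Fin n) (Fin n) K} (h : MSim A B) : MSim B A := by
  obtain ⟨P, hP, rfl⟩ := h
  refine ⟨P⁻¹, ?_, ?_⟩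
  · rw [Matrix.det_nonsing_inv]; exact isUnit_ringInverse.mpr hP
  · rw [Matrix.nonsing_inv_nonsing_inv _ hP]
    rw [Matrix.mul_assoc P B P⁻¹]
    rw [← Matrix.mul_assoc P⁻¹ P (B * P⁻¹), Matrix.nonsing_inv_mul _ hP, Matrix.one_mul]
    rw [Matrix.mul_assoc B P⁻¹ P, Matrix.nonsing_inv_mul _ hP, Matrix.mul_one]

lemma MSim.trans {A B C : Matrix (Fin n) (Fin n) K} (h1 : MSim A B) (h2 : MSim B C) :
    MSim A C := by
  obtain ⟨P, hP, rfl⟩ := h1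
  obtain ⟨Q, hQ, rfl⟩ := h2
  refine ⟨P * Q, by rw [Matrix.det_mul]; exact hP.mul hQ, ?_⟩
  rw [Matrix.mul_inv_rev]
  noncomm_ring

lemma charpoly_diagonal (d : Fin n → K) :
    (diagonal d).charpoly = ∏ i, (X - C (d i)) := by
  rw [Matrix.charpoly]
  have : charmatrix (diagonal d) = diagonal (fun i => X - C (d i)) := by
    ext i j
    by_cases h : i = j <;> simp [h, charmatrix_apply, Matrix.one_apply, diagonal_apply]
  rw [this, Matrix.det_diagonal]

lemma multiset_eq_of_charpoly_diag {dY dJ : Fin n → ℂ}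
    (h : (diagonal dY).charpoly = (diagonal dJ).charpoly) :
    Multiset.map dY Finset.univ.val = Multiset.map dJ Finset.univ.val := by
  rw [_root_.charpoly_diagonal, _root_.charpoly_diagonal] at h
  have key : ∀ d : Fin n → ℂ, ∏ i, (X - C (d i))
      = (Multiset.map (fun a => X - C a) (Multiset.map d Finset.univ.val)).prod := by
    intro d
    rw [Multiset.map_map]
    rfl
  rw [key dY, key dJ] at h
  have := congrArg Polynomial.roots h
  rwa [Polynomial.roots_multiset_prod_X_sub_C, Polynomial.roots_multiset_prod_X_sub_C] at this

lemma matrix_commute_exp {X Y : Matrix (Fin n) (Fin n) ℂ} (h : Commute X Y) :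
    Commute (exp X) (exp Y) := by
  letI : SeminormedRing (Matrix (Fin n) (Fin n) ℂ) := Matrix.linftyOpSemiNormedRing
  letI : NormedRing (Matrix (Fin n) (Fin n) ℂ) := Matrix.linftyOpNormedRing
  letI : NormedAlgebra ℂ (Matrix (Fin n) (Fin n) ℂ) := Matrix.linftyOpNormedAlgebra
  exact h.exp

lemma eq_of_isFinitelySemisimple_of_sub_nilpotent
    {V : Type*} [AddCommGroup V] [Module ℂ V] [FiniteDimensional ℂ V]
    {a b : Module.End ℂ V} (ha : a.IsFinitelySemisimple) (hb : b.IsFinitelySemisimple)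
    (hcomm : Commute a b) (hnil : IsNilpotent (a - b)) : a = b := by
  ext v
  have hsup : ⨆ μ, a.maxGenEigenspace μ = ⊤ := Module.End.iSup_maxGenEigenspace_eq_top a
  have hv : v ∈ ⨆ μ, a.maxGenEigenspace μ := hsup ▸ Submodule.mem_top
  have key : ∀ μ : ℂ, ∀ w ∈ a.maxGenEigenspace μ, a w = b w := by
    intro μ w hw
    have h1 : b w = μ • w :=
      Module.End.apply_eq_of_mem_of_comm_of_isFinitelySemisimple_of_isNil hw hcomm hb hnil
    have h2 : a w = μ • w := by
      rw [ha.maxGenEigenspace_eq_eigenspace] at hw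
      rwa [Module.End.mem_eigenspace_iff] at hw
    rw [h1, h2]
  refine Submodule.iSup_induction (motive := fun w => a w = b w) _ hv key (by simp) ?_
  intro x y hx hy
  rw [map_add, map_add, hx, hy]

lemma diagonalizable_of_exp_diagonalizable (A : Matrix (Fin n) (Fin n) ℂ)
    (h : ∃ (P : Matrix (Fin n) (Fin n) ℂ) (d : Fin n → ℂ),
      IsUnit P.det ∧ exp A = P * diagonal d * P⁻¹) :
    ∃ (P : Matrix (Fin n) (Fin n) ℂ) (d : Fin n → ℂ),
      IsUnit P.det ∧ A = P * diagonal d * P⁻¹ := by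
  set E : Matrix (Fin n) (Fin n) ℂ ≃ₐ[ℂ] Module.End ℂ (Fin n → ℂ) :=
    Matrix.toLinAlgEquiv' with hE
  obtain ⟨nn, hnmem, s, hsmem, hnnil, hsss, hfeq⟩ :=
    Module.End.exists_isNilpotent_isSemisimple (f := E A)
  -- commute
  have hcomm' : Commute nn s := by
    rw [Algebra.adjoin_singleton_eq_range_aeval] at hnmem hsmem
    obtain ⟨p, rfl⟩ := hnmem
    obtain ⟨q, rfl⟩ := hsmem
    show _ * _ = _ * _
    rw [← _root_.map_mul, ← _root_.map_mul, mul_comm]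
  set N : Matrix (Fin n) (Fin n) ℂ := E.symm nn with hN
  set S : Matrix (Fin n) (Fin n) ℂ := E.symm s with hS
  have hA : A = N + S := by
    apply E.injective
    rw [map_add, hN, hS, E.apply_symm_apply, E.apply_symm_apply]
    exact hfeq
  have hNnil : IsNilpotent N := IsNilpotent.map hnnil (E.symm : _ ≃ₐ[ℂ] _)
  have hcomm : Commute N S := hcomm'.map (E.symm : _ ≃ₐ[ℂ] _)
  have hES : E S = s := E.apply_symm_apply s
  -- S is diagonalizable
  obtain ⟨Q, e, hQ, hSdiag⟩ := diagonalizable_of_isFinitelySemisimple S (by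
    rw [hES]; exact hsss.isFinitelySemisimple)
  -- exp S is diagonalizable
  have hexpS : exp S = Q * diagonal (exp e) * Q⁻¹ := by
    rw [hSdiag, Matrix.exp_conj Q (diagonal e) ((Matrix.isUnit_iff_isUnit_det _).mpr hQ),
      Matrix.exp_diagonal]
  -- decompose exp A
  obtain ⟨B, hNB, hBu, hMeq⟩ := exists_exp_nilpotent_factor hNnil
  have hexpadd : exp A = exp N * exp S := by
    rw [hA]
    letI : SeminormedRing (Matrix (Fin n) (Fin n) ℂ) := Matrix.linftyOpSemiNormedRing
    letI : NormedRing (Matrix (Fin n) (Fin n) ℂ) := Matrix.linftyOpNormedRing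
    letI : NormedAlgebra ℂ (Matrix (Fin n) (Fin n) ℂ) := Matrix.linftyOpNormedAlgebra
    letI : NormedAlgebra ℚ (Matrix (Fin n) (Fin n) ℂ) := Matrix.linftyOpNormedAlgebra
    exact NormedSpace.exp_add_of_commute hcomm
  have hKnil : IsNilpotent (exp A - exp S) := by
    have hfact : exp A - exp S = (exp N - 1) * exp S := by
      rw [hexpadd, sub_mul, one_mul]
    rw [hfact]
    have hc : Commute (exp N - 1) (exp S) :=
      (matrix_commute_exp hcomm).sub_left (Commute.one_left _)
    have hMnil : IsNilpotent (exp N - 1) := by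
      rw [hMeq]; exact hNB.isNilpotent_mul_right hNnil
    exact hc.isNilpotent_mul_right hMnil
  -- both exps semisimple
  have hssA : Module.End.IsFinitelySemisimple (E (exp A)) :=
    (isSemisimple_of_diagonalizable _ h).isFinitelySemisimple
  have hssS : Module.End.IsFinitelySemisimple (E (exp S)) :=
    (isSemisimple_of_diagonalizable _ ⟨Q, exp e, hQ, hexpS⟩).isFinitelySemisimple
  have hcommexp : Commute (E (exp A)) (E (exp S)) := by
    refine Commute.map ?_ (E : _ ≃ₐ[ℂ] _)
    rw [hexpadd]
    exact (matrix_commute_exp hcomm).mul_left (Commute.refl _)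
  have hnilE : IsNilpotent (E (exp A) - E (exp S)) := by
    rw [← map_sub]
    exact IsNilpotent.map hKnil (E : _ ≃ₐ[ℂ] _)
  have heq : exp A = exp S := by
    apply E.injective
    exact eq_of_isFinitelySemisimple_of_sub_nilpotent hssA hssS hcommexp hnilE
  -- deduce N = 0
  have hexpN1 : exp N = 1 := by
    have h0 : (exp N - 1) * exp S = 0 := by
      rw [sub_mul, one_mul, ← hexpadd, heq, sub_self]
    obtain ⟨u, hu⟩ := Matrix.isUnit_exp S
    rw [← hu, Units.mul_left_eq_zero, sub_eq_zero] at h0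
    exact h0
  have hN0 : N = 0 := by
    have h0 : N * B = 0 := by rw [← hMeq, hexpN1, sub_self]
    obtain ⟨u, hu⟩ := hBu
    rw [← hu, Units.mul_left_eq_zero] at h0
    exact h0
  refine ⟨Q, e, hQ, ?_⟩
  rw [hA, hN0, zero_add, hSdiag]


lemma matrix_exp_map_complex (Y : Matrix (Fin n) (Fin n) ℝ) :
    (exp Y).map (fun x => (x : ℂ)) = exp (Y.map (fun x => (x : ℂ))) := by
  have h1 : (exp Y).map (fun x => (x : ℂ)) = exp (Y.map (fun x => (x : ℂ))) := by
    have hcoe : ⇑(RingHom.mapMatrix (Complex.ofRealHom) :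
        Matrix (Fin n) (Fin n) ℝ →+* Matrix (Fin n) (Fin n) ℂ)
        = fun A : Matrix (Fin n) (Fin n) ℝ => A.map (fun x => (x : ℂ)) := by
      funext A
      rfl
    have hc : Continuous (RingHom.mapMatrix (Complex.ofRealHom) :
        Matrix (Fin n) (Fin n) ℝ →+* Matrix (Fin n) (Fin n) ℂ) := by
      rw [hcoe]
      exact Continuous.matrix_map continuous_id Complex.continuous_ofReal
    letI : SeminormedRing (Matrix (Fin n) (Fin n) ℝ) := Matrix.linftyOpSemiNormedRing
    letI : NormedRing (Matrix (Fin n) (Fin n) ℝ) := Matrix.linftyOpNormedRing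
    letI : NormedAlgebra ℝ (Matrix (Fin n) (Fin n) ℝ) := Matrix.linftyOpNormedAlgebra
    letI : SeminormedRing (Matrix (Fin n) (Fin n) ℂ) := Matrix.linftyOpSemiNormedRing
    letI : NormedRing (Matrix (Fin n) (Fin n) ℂ) := Matrix.linftyOpNormedRing
    letI : NormedAlgebra ℝ (Matrix (Fin n) (Fin n) ℂ) := Matrix.linftyOpNormedAlgebra
    letI : NormedAlgebra ℚ (Matrix (Fin n) (Fin n) ℝ) := Matrix.linftyOpNormedAlgebra
    letI : NormedAlgebra ℚ (Matrix (Fin n) (Fin n) ℂ) := Matrix.linftyOpNormedAlgebra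
    have hc' : Continuous (⇑(RingHom.mapMatrix (Complex.ofRealHom) :
        Matrix (Fin n) (Fin n) ℝ →+* Matrix (Fin n) (Fin n) ℂ)) := hc
    have h2 := map_exp (RingHom.mapMatrix (Complex.ofRealHom) :
        Matrix (Fin n) (Fin n) ℝ →+* Matrix (Fin n) (Fin n) ℂ) hc' Y
    rw [hcoe] at h2
    exact h2
  exact h1

/-- Real matrices similar over ℂ are similar over ℝ. -/
lemma real_similar_of_complex_similar (Y J : Matrix (Fin n) (Fin n) ℝ)
    (h : MSim (Y.map (fun x => (x : ℂ))) (J.map (fun x => (x : ℂ)))) :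
    ∃ P : Matrix (Fin n) (Fin n) ℝ, IsUnit P.det ∧ Y = P * J * P⁻¹ := by
  obtain ⟨P, hP, hYJ⟩ := h
  set Yc := Y.map (fun x => (x : ℂ)) with hYc
  set Jc := J.map (fun x => (x : ℂ)) with hJc
  have hint : Yc * P = P * Jc := by
    rw [hYJ, Matrix.mul_assoc, Matrix.mul_assoc, Matrix.nonsing_inv_mul _ hP, Matrix.mul_one]
  set Q : Matrix (Fin n) (Fin n) ℝ := P.map Complex.re with hQ
  set R : Matrix (Fin n) (Fin n) ℝ := P.map Complex.im with hR
  have hintQ : Y * Q = Q * J := by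
    ext i j
    have h := congrArg (fun M => (M i j).re) hint
    simp only [Matrix.mul_apply, Complex.re_sum] at h
    simpa [hYc, hJc, hQ, Matrix.map_apply, Matrix.mul_apply] using h
  have hintR : Y * R = R * J := by
    ext i j
    have h := congrArg (fun M => (M i j).im) hint
    simp only [Matrix.mul_apply, Complex.im_sum] at h
    simpa [hYc, hJc, hR, Matrix.map_apply, Matrix.mul_apply] using h
  -- find a real t making Q + t R invertible
  set q : Polynomial ℝ :=
    (Q.map (C : ℝ →+* Polynomial ℝ) + R.map (fun x => C x * X)).det with hq
  have hq0 : q ≠ 0 := by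
    intro h0
    have hφ := congrArg (Polynomial.eval₂RingHom Complex.ofRealHom Complex.I) h0
    rw [map_zero, hq, RingHom.map_det] at hφ
    have hmap : (Polynomial.eval₂RingHom Complex.ofRealHom Complex.I).mapMatrix
        (Q.map (C : ℝ →+* Polynomial ℝ) + R.map (fun x => C x * X)) = P := by
      ext i j
      rw [RingHom.mapMatrix_apply, Matrix.map_apply, Matrix.add_apply, Matrix.map_apply,
        Matrix.map_apply]
      rw [Polynomial.coe_eval₂RingHom, Polynomial.eval₂_add, Polynomial.eval₂_C,
        Polynomial.eval₂_mul, Polynomial.eval₂_C, Polynomial.eval₂_X]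
      rw [hQ, hR, Matrix.map_apply, Matrix.map_apply]
      exact Complex.re_add_im (P i j)
    rw [hmap] at hφ
    exact hP.ne_zero hφ
  obtain ⟨t, ht⟩ : ∃ t : ℝ, ¬ q.IsRoot t := by
    have := (Polynomial.finite_setOf_isRoot hq0).infinite_compl
    obtain ⟨t, ht⟩ := this.nonempty
    exact ⟨t, ht⟩
  have heval : q.eval t = (Q + t • R).det := by
    rw [hq]
    have h2 : (Polynomial.evalRingHom t) ((Q.map (C : ℝ →+* Polynomial ℝ)
        + R.map (fun x => C x * X)).det)
        = ((Polynomial.evalRingHom t).mapMatrix (Q.map (C : ℝ →+* Polynomial ℝ)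
        + R.map (fun x => C x * X))).det := RingHom.map_det _ _
    have h3 : (Polynomial.evalRingHom t).mapMatrix (Q.map (C : ℝ →+* Polynomial ℝ)
        + R.map (fun x => C x * X)) = Q + t • R := by
      ext i j
      rw [RingHom.mapMatrix_apply, Matrix.map_apply, Matrix.add_apply, Matrix.map_apply,
        Matrix.map_apply]
      rw [Polynomial.coe_evalRingHom, Polynomial.eval_add, Polynomial.eval_C,
        Polynomial.eval_mul, Polynomial.eval_C, Polynomial.eval_X]
      rw [Matrix.add_apply, Matrix.smul_apply, smul_eq_mul]
      ring
    rw [← h3, ← h2]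
    rfl
  have hdet : IsUnit (Q + t • R).det := by
    rw [← heval]
    exact isUnit_iff_ne_zero.mpr ht
  refine ⟨Q + t • R, hdet, ?_⟩
  have hint2 : Y * (Q + t • R) = (Q + t • R) * J := by
    rw [Matrix.mul_add, Matrix.add_mul, hintQ]
    congr 1
    rw [Matrix.mul_smul, Matrix.smul_mul, hintR]
  calc Y = Y * (Q + t • R) * (Q + t • R)⁻¹ := by
        rw [Matrix.mul_assoc, Matrix.mul_nonsing_inv _ hdet, Matrix.mul_one]
    _ = (Q + t • R) * J * (Q + t • R)⁻¹ := by rw [hint2]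

lemma similar_of_charpoly_exp (JM J Y : Matrix (Fin n) (Fin n) ℝ)
    (hJMss : JM.IsSemisimpleR) (hJss : J.IsSemisimpleR)
    (hexpY : exp Y = JM) (hcp : Y.charpoly = J.charpoly) :
    ∃ P : Matrix (Fin n) (Fin n) ℝ, IsUnit P.det ∧ Y = P * J * P⁻¹ := by
  apply real_similar_of_complex_similar
  set Yc := Y.map (fun x => (x : ℂ)) with hYcdef
  set Jc := J.map (fun x => (x : ℂ)) with hJcdef
  obtain ⟨PM, dM, hPM, hJMdiag⟩ := hJMss
  have hYcexp : exp Yc = PM * diagonal dM * PM⁻¹ := by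
    rw [← matrix_exp_map_complex, hexpY]
    exact hJMdiag
  obtain ⟨P1, d1, hP1, hYdiag⟩ :=
    diagonalizable_of_exp_diagonalizable Yc ⟨PM, dM, hPM, hYcexp⟩
  obtain ⟨P2, d2, hP2, hJdiag⟩ := hJss
  have hcpc : Yc.charpoly = Jc.charpoly := by
    rw [hYcdef, hJcdef]
    have h1 : Y.map (fun x => (x : ℂ)) = Y.map (Complex.ofRealHom : ℝ →+* ℂ) := rfl
    have h2 : J.map (fun x => (x : ℂ)) = J.map (Complex.ofRealHom : ℝ →+* ℂ) := rfl
    rw [h1, h2, Matrix.charpoly_map, Matrix.charpoly_map, hcp]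
  have hd : (diagonal d1).charpoly = (diagonal d2).charpoly := by
    have e1 : Yc.charpoly = (diagonal d1).charpoly := by
      rw [hYdiag, charpoly_conj _ _ hP1]
    have e2 : Jc.charpoly = (diagonal d2).charpoly := by
      rw [hJcdef, hJdiag, charpoly_conj _ _ hP2]
    rw [← e1, ← e2, hcpc]
  obtain ⟨σ, hσ⟩ := exists_perm_of_multiset_map_eq (multiset_eq_of_charpoly_diag hd)
  obtain ⟨Rm, hRm, hRdiag⟩ := diagonal_perm_similar d1 σ
  have s1 : MSim Yc (diagonal d1) := ⟨P1, hP1, hYdiag⟩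
  have s2 : MSim (diagonal d2) (diagonal d1) := by
    rw [← hσ]
    exact ⟨Rm, hRm, hRdiag⟩
  have s3 : MSim Jc (diagonal d2) := ⟨P2, hP2, hJdiag⟩
  exact s1.trans (s2.symm.trans s3.symm)

end Aux

open NormedSpace Polynomial in
/-- Let `𝒥_M` be semi-simple and `𝒥` a semi-simple real matrix with `exp 𝒥 = 𝒥_M`.
Then the set of real logarithms of `𝒥_M` that are similar to `𝒥` is closed in `M(n,ℝ)`. -/
theorem logs_similar_to_jordan_form_isClosed {n : ℕ}
    (JM J : Matrix (Fin n) (Fin n) ℝ)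
    (hJMss : JM.IsSemisimpleR) (hJss : J.IsSemisimpleR)
    (hexp : NormedSpace.exp J = JM) :
    IsClosed {Y : Matrix (Fin n) (Fin n) ℝ | NormedSpace.exp Y = JM ∧
      ∃ P : Matrix (Fin n) (Fin n) ℝ, IsUnit P.det ∧ Y = P * J * P⁻¹} := by
  have hset : {Y : Matrix (Fin n) (Fin n) ℝ | NormedSpace.exp Y = JM ∧
      ∃ P : Matrix (Fin n) (Fin n) ℝ, IsUnit P.det ∧ Y = P * J * P⁻¹}
      = (NormedSpace.exp) ⁻¹' {JM} ∩
        ⋂ t : ℝ, {Y : Matrix (Fin n) (Fin n) ℝ | (t • 1 - Y).det = (t • 1 - J).det} := by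
    ext Y
    simp only [Set.mem_setOf_eq, Set.mem_inter_iff, Set.mem_preimage, Set.mem_singleton_iff,
      Set.mem_iInter]
    constructor
    · rintro ⟨he, P, hP, rfl⟩
      refine ⟨he, fun t => ?_⟩
      have h1 : t • (1 : Matrix (Fin n) (Fin n) ℝ) - P * J * P⁻¹ = P * (t • 1 - J) * P⁻¹ := by
        rw [Matrix.mul_sub, Matrix.sub_mul]
        congr 1
        rw [Matrix.mul_smul, Matrix.mul_one, Matrix.smul_mul, Matrix.mul_nonsing_inv _ hP]
      rw [h1, Matrix.det_mul, Matrix.det_mul, Matrix.det_nonsing_inv, mul_comm,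
        ← mul_assoc, Ring.inverse_mul_cancel _ hP, one_mul]
    · rintro ⟨he, ht⟩
      refine ⟨he, ?_⟩
      have hcp : Y.charpoly = J.charpoly := Polynomial.funext fun t => by
        rw [_root_.eval_charpoly, _root_.eval_charpoly]; exact ht t
      exact similar_of_charpoly_exp JM J Y hJMss hJss he hcp
  rw [hset]
  refine (IsClosed.preimage matrix_exp_continuous isClosed_singleton).inter ?_
  exact isClosed_iInter fun t => isClosed_eq
    ((continuous_const.sub continuous_id).matrix_det) continuous_const
end

section
/- Let M ∈ SO(n) such that −1 is not an eigenvalue of M. Then M has exactly one principal skew-symmetric real logarithm: there is a unique skew-symmetric real matrix X with exp(X) = M such that every eigenvalue of X has imaginary part in [−π, π]. -/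
open Matrix Polynomial

namespace UPSL

variable {n : ℕ}

lemma conj_pow (W A : Matrix (Fin n) (Fin n) ℂ)
    (hW : W * star W = 1) (k : ℕ) :
    (W * A * star W) ^ k = W * A ^ k * star W := by
  induction k with
  | zero => simpa using hW.symm
  | succ k ih =>
      have hW' : star W * W = 1 := mul_eq_one_comm.mp hW
      rw [pow_succ, ih, pow_succ]
      calc W * A ^ k * star W * (W * A * star W)
          = W * A ^ k * (star W * W) * (A * star W) := by
            simp only [mul_assoc]
        _ = W * (A ^ k * A) * star W := by rw [hW']; simp only [mul_one, mul_assoc]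

lemma aeval_conj (W A : Matrix (Fin n) (Fin n) ℂ)
    (hW : W * star W = 1) (p : ℂ[X]) :
    aeval (W * A * star W) p = W * aeval A p * star W := by
  induction p using Polynomial.induction_on' with
  | add p q hp hq => simp [map_add, hp, hq, mul_add, add_mul]
  | monomial k a =>
      rw [aeval_monomial, aeval_monomial, conj_pow W A hW k,
        Algebra.algebraMap_eq_smul_one]
      simp [smul_mul_assoc, mul_smul_comm]

lemma aeval_diagonal (e : Fin n → ℂ) (p : ℂ[X]) :
    aeval (diagonal e) p = diagonal fun j => p.eval (e j) := by
  induction p using Polynomial.induction_on' with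
  | add p q hp hq => simp [map_add, hp, hq, diagonal_add]
  | monomial k a =>
      rw [aeval_monomial]
      simp only [algebraMap_eq_diagonal, diagonal_pow, diagonal_mul_diagonal]
      congr 1
      funext j
      simp [Pi.algebraMap_apply, eval_monomial]

lemma key (W₁ W₂ : Matrix (Fin n) (Fin n) ℂ)
    (h1 : W₁ * star W₁ = 1) (h2 : W₂ * star W₂ = 1)
    (e₁ e₂ : Fin n → ℂ) (f : ℂ → ℂ)
    (h : W₁ * diagonal e₁ * star W₁ = W₂ * diagonal e₂ * star W₂) :
    W₁ * diagonal (fun j => f (e₁ j)) * star W₁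
      = W₂ * diagonal (fun j => f (e₂ j)) * star W₂ := by
  classical
  set s : Finset ℂ := Finset.image e₁ Finset.univ ∪ Finset.image e₂ Finset.univ with hs
  set p : ℂ[X] := Lagrange.interpolate s id f with hp
  have hev : ∀ z ∈ s, p.eval z = f z := fun z hz =>
    Lagrange.eval_interpolate_at_node f (Set.injOn_id _) hz
  have k1 : ∀ (W : Matrix (Fin n) (Fin n) ℂ) (e : Fin n → ℂ),
      W * star W = 1 → (∀ j, e j ∈ s) →
      W * diagonal (fun j => f (e j)) * star W = aeval (W * diagonal e * star W) p := by
    intro W e hWu hmem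
    have hfe : (fun j => f (e j)) = fun j => p.eval (e j) :=
      funext fun j => (hev _ (hmem j)).symm
    rw [hfe, aeval_conj W _ hWu p, aeval_diagonal]
  rw [k1 W₁ e₁ h1 (fun j => Finset.mem_union_left _ (Finset.mem_image_of_mem _ (Finset.mem_univ j))),
    k1 W₂ e₂ h2 (fun j => Finset.mem_union_right _ (Finset.mem_image_of_mem _ (Finset.mem_univ j))), h]

lemma spec_diag (e : Fin n → ℂ) (μ : ℂ) :
    μ ∈ spectrum ℂ (diagonal e) ↔ ∃ j, e j = μ := by
  have hd : (algebraMap ℂ (Matrix (Fin n) (Fin n) ℂ)) μ - diagonal e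
      = diagonal fun j => μ - e j := by
    rw [Matrix.algebraMap_eq_diagonal]
    ext i j
    by_cases hij : i = j <;>
      simp [Matrix.diagonal_apply, Matrix.sub_apply, hij, Pi.algebraMap_apply]
  rw [spectrum.mem_iff, hd, Matrix.isUnit_iff_isUnit_det, det_diagonal]
  simp only [isUnit_iff_ne_zero, not_not, Finset.prod_eq_zero_iff]
  constructor
  · rintro ⟨j, -, hj⟩
    exact ⟨j, by simpa [sub_eq_zero, Pi.algebraMap_apply, eq_comm] using hj⟩
  · rintro ⟨j, hj⟩
    exact ⟨j, Finset.mem_univ j, by simp [Pi.algebraMap_apply, hj, sub_eq_zero]⟩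

lemma spec_conj (W A : Matrix (Fin n) (Fin n) ℂ) (h : W * star W = 1) :
    spectrum ℂ (W * A * star W) = spectrum ℂ A :=
  spectrum.units_conjugate (u := ⟨W, star W, h, mul_eq_one_comm.mp h⟩)

end UPSL

open UPSL NormedSpace

/-- If `M ∈ SO(n)` and `-1` is not an eigenvalue of `M`, then `M` has exactly one
principal skew-symmetric real logarithm: a unique skew-symmetric `X` with `exp X = M`
whose eigenvalues all have imaginary part in `[-π, π]`. -/
theorem unique_principal_skew_log {n : ℕ} (M : Matrix (Fin n) (Fin n) ℝ)
    (hM : M ∈ Matrix.orthogonalGroup (Fin n) ℝ) (hdet : M.det = 1)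
    (hneg : (-1 : ℂ) ∉ spectrum ℂ (M.map (fun x => (x : ℂ)))) :
    ∃! X : Matrix (Fin n) (Fin n) ℝ,
      Xᵀ = -X ∧ NormedSpace.exp X = M ∧
        ∀ μ ∈ spectrum ℂ (X.map (fun x => (x : ℂ))),
          μ.im ∈ Set.Icc (-Real.pi) Real.pi := by
  classical
  set φ : Matrix (Fin n) (Fin n) ℝ →+* Matrix (Fin n) (Fin n) ℂ :=
    (algebraMap ℝ ℂ).mapMatrix with hφdef
  have hφapp : ∀ A : Matrix (Fin n) (Fin n) ℝ, φ A = A.map (fun x => (x : ℂ)) := by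
    intro A; ext i j
    simp [hφdef, RingHom.mapMatrix_apply, Matrix.map_apply]
  have hφinj : Function.Injective φ := by
    intro A B hAB
    rw [hφapp, hφapp] at hAB
    ext i j
    have h2 := congrArg (fun C : Matrix (Fin n) (Fin n) ℂ => C i j) hAB
    simpa [Matrix.map_apply] using h2
  set Mc : Matrix (Fin n) (Fin n) ℂ := φ M with hMcdef
  have hnegMc : (-1 : ℂ) ∉ spectrum ℂ Mc := by rw [hMcdef, hφapp]; exact hneg
  have hstarφ : ∀ A : Matrix (Fin n) (Fin n) ℝ, star (φ A) = φ Aᵀ := by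
    intro A; ext i j
    simp [hφapp, Matrix.star_eq_conjTranspose, Matrix.conjTranspose_apply, Matrix.map_apply,
      Matrix.transpose_apply, Complex.conj_ofReal]
  have hMo : M * star M = 1 := (Matrix.mem_unitaryGroup_iff).mp hM
  have hstarM : star M = Mᵀ := by
    ext i j; simp [Matrix.star_eq_conjTranspose, Matrix.conjTranspose_apply]
  have hMu : Mc * star Mc = 1 := by
    rw [hMcdef, hstarφ, ← _root_.map_mul φ, ← hstarM, hMo, _root_.map_one φ]
  have hMu' : star Mc * Mc = 1 := mul_eq_one_comm.mp hMu
  -- the Cayley transform of `Mc`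
  set N : Matrix (Fin n) (Fin n) ℂ := 1 + Mc with hNdef
  have hNunit : IsUnit N := by
    have hneg' := spectrum.notMem_iff.mp hnegMc
    have h1 : (algebraMap ℂ (Matrix (Fin n) (Fin n) ℂ)) (-1) - Mc = -N := by
      rw [hNdef, map_neg, _root_.map_one, neg_add]
      abel
    rw [h1] at hneg'
    exact (IsUnit.neg_iff N).mp hneg'
  have hNdet : IsUnit N.det := (Matrix.isUnit_iff_isUnit_det N).mp hNunit
  have hNinv : N⁻¹ * N = 1 := Matrix.nonsing_inv_mul N hNdet
  have hNinv' : N * N⁻¹ = 1 := Matrix.mul_nonsing_inv N hNdet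
  have hcomm0 : (1 - Mc) * N = N * (1 - Mc) := by rw [hNdef]; noncomm_ring
  set A : Matrix (Fin n) (Fin n) ℂ := (1 - Mc) * N⁻¹ with hAdef
  have hcommA : A = N⁻¹ * (1 - Mc) := by
    have h : N * A = 1 - Mc := by
      rw [hAdef, ← mul_assoc, ← hcomm0, mul_assoc, hNinv', mul_one]
    calc A = (N⁻¹ * N) * A := by rw [hNinv, one_mul]
      _ = N⁻¹ * (1 - Mc) := by rw [mul_assoc, h]
  set T : Matrix (Fin n) (Fin n) ℂ := Complex.I • A with hTdef
  set Ms : Matrix (Fin n) (Fin n) ℂ := star Mc with hMsdef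
  have hMsinv : Ms⁻¹ = Mc := Matrix.inv_eq_right_inv hMu'
  have hT : Matrix.IsHermitian T := by
    show Tᴴ = T
    have hNH : Nᴴ = Ms * N := by
      rw [hNdef, conjTranspose_add, conjTranspose_one, ← Matrix.star_eq_conjTranspose, ← hMsdef,
        mul_add, mul_one, hMu', add_comm]
    have h3 : (Nᴴ)⁻¹ = N⁻¹ * Mc := by rw [hNH, Matrix.mul_inv_rev, hMsinv]
    have h4 : Mc * (1 - Ms) = Mc - 1 := by rw [mul_sub, mul_one, hMu]
    have h5 : Aᴴ = N⁻¹ * (Mc - 1) := by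
      rw [hAdef, conjTranspose_mul, Matrix.conjTranspose_nonsing_inv, h3, conjTranspose_sub,
        conjTranspose_one, ← Matrix.star_eq_conjTranspose, ← hMsdef, mul_assoc, h4]
    rw [hTdef, conjTranspose_smul, h5]
    have h6 : N⁻¹ * (Mc - 1) = -A := by
      rw [hcommA, ← mul_neg, neg_sub]
    rw [h6]
    simp
  set V : Matrix (Fin n) (Fin n) ℂ := (hT.eigenvectorUnitary : Matrix (Fin n) (Fin n) ℂ) with hVdef
  set t : Fin n → ℝ := hT.eigenvalues with htdef
  have hVu : V ∈ Matrix.unitaryGroup (Fin n) ℂ := hT.eigenvectorUnitary.2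
  have hVV : V * star V = 1 := (Matrix.mem_unitaryGroup_iff).mp hVu
  have hV'V : star V * V = 1 := (Matrix.mem_unitaryGroup_iff').mp hVu
  set Dt : Matrix (Fin n) (Fin n) ℂ := diagonal (fun j => (t j : ℂ)) with hDtdef
  have hspec : T = V * Dt * star V := by
    have h := hT.spectral_theorem
    rw [show (RCLike.ofReal ∘ hT.eigenvalues : Fin n → ℂ) = fun j => (t j : ℂ) from rfl] at h
    exact h
  have habc : A * Mc + A = 1 - Mc := by
    have h5 : A * (Mc + 1) = A * Mc + A := mul_add_one A Mc
    have h6 : Mc + 1 = N := by rw [hNdef, add_comm]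
    rw [← h5, h6, hAdef, mul_assoc, hNinv, mul_one]
  have hTMc : (T + Complex.I • 1) * Mc = Complex.I • 1 - T := by
    have hbase : A * Mc + Mc = 1 - A := by
      calc A * Mc + Mc = (A * Mc + A) + Mc - A := by abel
        _ = 1 - A := by rw [habc]; abel
    have hmid : T * Mc + Complex.I • Mc = Complex.I • (1 : Matrix (Fin n) (Fin n) ℂ) - T := by
      calc T * Mc + Complex.I • Mc = Complex.I • (A * Mc + Mc) := by
            rw [smul_add, hTdef, Matrix.smul_mul]
        _ = Complex.I • ((1 : Matrix (Fin n) (Fin n) ℂ) - A) := by rw [hbase]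
        _ = Complex.I • (1 : Matrix (Fin n) (Fin n) ℂ) - T := by rw [smul_sub, hTdef]
    have hsm2 : (Complex.I • (1 : Matrix (Fin n) (Fin n) ℂ)) * Mc = Complex.I • Mc := by
      rw [Matrix.smul_mul, one_mul]
    calc (T + Complex.I • 1) * Mc = T * Mc + (Complex.I • 1) * Mc := add_mul _ _ _
      _ = T * Mc + Complex.I • Mc := by rw [hsm2]
      _ = _ := hmid
  have hins : ∀ P Q : Matrix (Fin n) (Fin n) ℂ,
      (star V * P * V) * (star V * Q * V) = star V * (P * Q) * V := by
    intro P Q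
    calc (star V * P * V) * (star V * Q * V)
        = star V * (P * ((V * star V) * (Q * V))) := by simp only [mul_assoc]
      _ = star V * (P * Q) * V := by rw [hVV, one_mul]; simp only [mul_assoc]
  have hVT : star V * T * V = Dt := by
    rw [hspec]
    calc star V * (V * Dt * star V) * V = (star V * V) * Dt * (star V * V) := by
          simp only [mul_assoc]
      _ = Dt := by rw [hV'V, one_mul, mul_one]
  have hsm1 : star V * (Complex.I • (1 : Matrix (Fin n) (Fin n) ℂ)) * V
      = Complex.I • (1 : Matrix (Fin n) (Fin n) ℂ) := by
    rw [Matrix.mul_smul, mul_one, Matrix.smul_mul, hV'V]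
  have hTi : star V * (T + Complex.I • 1) * V = Dt + Complex.I • 1 := by
    rw [mul_add, add_mul, hVT, hsm1]
  set B : Matrix (Fin n) (Fin n) ℂ := star V * Mc * V with hBdef
  have hDB : (Dt + Complex.I • 1) * B = Complex.I • 1 - Dt := by
    calc (Dt + Complex.I • 1) * B
        = (star V * (T + Complex.I • 1) * V) * (star V * Mc * V) := by rw [hTi, hBdef]
      _ = star V * ((T + Complex.I • 1) * Mc) * V := hins _ _
      _ = star V * (Complex.I • 1 - T) * V := by rw [hTMc]
      _ = Complex.I • 1 - Dt := by rw [mul_sub, sub_mul, hsm1, hVT]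
  have hDt1 : Dt + Complex.I • 1 = diagonal (fun j => (t j : ℂ) + Complex.I) := by
    ext i j
    by_cases hij : i = j <;>
      simp [hDtdef, Matrix.diagonal_apply, hij, Matrix.add_apply, Matrix.smul_apply,
        Matrix.one_apply]
  have hDt2 : Complex.I • (1 : Matrix (Fin n) (Fin n) ℂ) - Dt
      = diagonal (fun j => Complex.I - (t j : ℂ)) := by
    ext i j
    by_cases hij : i = j <;>
      simp [hDtdef, Matrix.diagonal_apply, hij, Matrix.sub_apply, Matrix.smul_apply,
        Matrix.one_apply]
  have htne : ∀ j, ((t j : ℂ) + Complex.I) ≠ 0 := by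
    intro j h
    have him := congrArg Complex.im h
    simp at him
  have hDunit : IsUnit (diagonal (fun j => (t j : ℂ) + Complex.I)) := by
    rw [Matrix.isUnit_iff_isUnit_det, det_diagonal]
    exact isUnit_iff_ne_zero.mpr (Finset.prod_ne_zero_iff.mpr fun j _ => htne j)
  set d : Fin n → ℂ := fun j => ((t j : ℂ) + Complex.I)⁻¹ * (Complex.I - (t j : ℂ)) with hddef
  have hBdiag : B = diagonal d := by
    have h7 : diagonal (fun j => (t j : ℂ) + Complex.I) * B
        = diagonal (fun j => Complex.I - (t j : ℂ)) := by
      rw [← hDt1, hDB, hDt2]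
    have h8 := congrArg
      (fun Z => (diagonal (fun j => ((t j : ℂ) + Complex.I)⁻¹)) * Z) h7
    rw [← mul_assoc, diagonal_mul_diagonal] at h8
    have hcan : (fun j => ((t j : ℂ) + Complex.I)⁻¹ * ((t j : ℂ) + Complex.I))
        = fun _ => (1 : ℂ) := funext fun j => inv_mul_cancel₀ (htne j)
    rw [hcan, diagonal_one, one_mul] at h8
    rw [h8, diagonal_mul_diagonal, hddef]
  have hMcV : Mc = V * diagonal d * star V := by
    calc Mc = (V * star V) * Mc * (V * star V) := by rw [hVV, one_mul, mul_one]
      _ = V * (star V * Mc * V) * star V := by simp only [mul_assoc]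
      _ = V * diagonal d * star V := by rw [← hBdef, hBdiag]
  -- the principal angles
  set θ : Fin n → ℝ := fun j => 2 * Real.arctan (t j) with hθdef
  have hθlt : ∀ j, θ j < Real.pi ∧ -Real.pi < θ j := by
    intro j
    have h1 := Real.arctan_lt_pi_div_two (t j)
    have h2 := Real.neg_pi_div_two_lt_arctan (t j)
    constructor <;> simp only [hθdef] <;> linarith
  have hcos : ∀ j, Real.cos (θ j) = (1 - t j ^ 2) / (1 + t j ^ 2) := by
    intro j
    have hpos : (0 : ℝ) < 1 + t j ^ 2 := by positivity
    have hsq : Real.sqrt (1 + t j ^ 2) ^ 2 = 1 + t j ^ 2 := Real.sq_sqrt hpos.le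
    rw [hθdef]
    simp only
    rw [Real.cos_two_mul, Real.cos_arctan, div_pow, one_pow, hsq]
    field_simp
    ring
  have hsin : ∀ j, Real.sin (θ j) = 2 * t j / (1 + t j ^ 2) := by
    intro j
    have hpos : (0 : ℝ) < 1 + t j ^ 2 := by positivity
    have hsq : Real.sqrt (1 + t j ^ 2) ^ 2 = 1 + t j ^ 2 := Real.sq_sqrt hpos.le
    have hs0 : Real.sqrt (1 + t j ^ 2) ≠ 0 := by positivity
    rw [hθdef]
    simp only
    rw [Real.sin_two_mul, Real.sin_arctan, Real.cos_arctan,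
      show 2 * (t j / Real.sqrt (1 + t j ^ 2)) * (1 / Real.sqrt (1 + t j ^ 2))
        = 2 * t j / (Real.sqrt (1 + t j ^ 2) * Real.sqrt (1 + t j ^ 2)) from by ring,
      Real.mul_self_sqrt hpos.le]
  have hexpd : ∀ j, Complex.exp ((θ j : ℂ) * Complex.I) = d j := by
    intro j
    have hpos : (0 : ℝ) < 1 + t j ^ 2 := by positivity
    have h1C : ((1 + t j ^ 2 : ℝ) : ℂ) ≠ 0 := Complex.ofReal_ne_zero.mpr hpos.ne'
    have h0 : (1 + t j ^ 2) ≠ 0 := hpos.ne'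
    have hcR : (1 + t j ^ 2) * Real.cos (θ j) = 1 - t j ^ 2 := by
      rw [hcos j]; field_simp
    have hsR : (1 + t j ^ 2) * Real.sin (θ j) = 2 * t j := by
      rw [hsin j]; field_simp
    have h1C' : ((1 : ℂ) + (t j : ℂ) ^ 2) ≠ 0 := by exact_mod_cast h1C
    have hcC : ((1 : ℂ) + (t j : ℂ) ^ 2) * (Real.cos (θ j) : ℂ) = 1 - (t j : ℂ) ^ 2 := by
      exact_mod_cast congrArg Complex.ofReal hcR
    have hsC : ((1 : ℂ) + (t j : ℂ) ^ 2) * (Real.sin (θ j) : ℂ) = 2 * (t j : ℂ) := by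
      exact_mod_cast congrArg Complex.ofReal hsR
    have hmul : ((t j : ℂ) + Complex.I) * Complex.exp ((θ j : ℂ) * Complex.I)
        = Complex.I - (t j : ℂ) := by
      rw [Complex.exp_mul_I, ← Complex.ofReal_cos, ← Complex.ofReal_sin]
      apply mul_left_cancel₀ h1C'
      linear_combination ((t j : ℂ) + Complex.I) * hcC
        + ((t j : ℂ) + Complex.I) * Complex.I * hsC + 2 * (t j : ℂ) * Complex.I_sq
    calc Complex.exp ((θ j : ℂ) * Complex.I)
        = ((t j : ℂ) + Complex.I)⁻¹ * (((t j : ℂ) + Complex.I)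
            * Complex.exp ((θ j : ℂ) * Complex.I)) := (inv_mul_cancel_left₀ (htne j) _).symm
      _ = d j := by rw [hmul, hddef]
  set f : ℂ → ℂ := fun z => (Complex.arg z : ℂ) * Complex.I with hfdef
  have hargθ : ∀ x : ℝ, -Real.pi < x → x ≤ Real.pi →
      Complex.arg (Complex.exp ((x : ℂ) * Complex.I)) = x := by
    intro x h1 h2
    rw [Complex.exp_mul_I]
    exact Complex.arg_cos_add_sin_mul_I ⟨h1, h2⟩
  have hfd : ∀ j, f (d j) = (θ j : ℂ) * Complex.I := by
    intro j
    rw [hfdef]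
    simp only
    rw [← hexpd j, hargθ _ (hθlt j).2 (hθlt j).1.le]
  set D' : Matrix (Fin n) (Fin n) ℂ := diagonal (fun j => (θ j : ℂ) * Complex.I) with hD'def
  set Xc : Matrix (Fin n) (Fin n) ℂ := V * D' * star V with hXcdef
  have e1 : diagonal (fun j => f (d j)) = D' := by
    rw [hD'def, show (fun j => f (d j)) = fun j => (θ j : ℂ) * Complex.I from
      funext fun j => hfd j]
  -- realness of Xc
  set J : Matrix (Fin n) (Fin n) ℂ → Matrix (Fin n) (Fin n) ℂ :=
    fun A => A.map (starRingEnd ℂ) with hJdef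
  have hJmul : ∀ P Q : Matrix (Fin n) (Fin n) ℂ, J (P * Q) = J P * J Q := by
    intro P Q
    exact Matrix.map_mul
  have hJone : J (1 : Matrix (Fin n) (Fin n) ℂ) = 1 := by
    rw [hJdef]
    exact Matrix.map_one _ (map_zero _) (map_one _)
  have hJstar : ∀ P : Matrix (Fin n) (Fin n) ℂ, star (J P) = J (star P) := by
    intro P; ext i j
    simp [hJdef, Matrix.map_apply, Matrix.star_eq_conjTranspose, Matrix.conjTranspose_apply]
  have hJdiag : ∀ v : Fin n → ℂ, J (diagonal v) = diagonal (fun j => starRingEnd ℂ (v j)) := by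
    intro v
    rw [hJdef]
    exact Matrix.diagonal_map (map_zero _)
  have hJMc : J Mc = Mc := by
    rw [hMcdef, hφapp]
    ext i j
    simp [hJdef, Matrix.map_apply, Complex.conj_ofReal]
  have hJVV : J V * star (J V) = 1 := by
    rw [hJstar, ← hJmul, hVV, hJone]
  have hMc2 : V * diagonal d * star V
      = J V * diagonal (fun j => starRingEnd ℂ (d j)) * star (J V) := by
    calc V * diagonal d * star V = Mc := hMcV.symm
      _ = J Mc := hJMc.symm
      _ = J (V * diagonal d * star V) := by rw [← hMcV]
      _ = J V * diagonal (fun j => starRingEnd ℂ (d j)) * star (J V) := by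
          rw [hJmul, hJmul, hJdiag, hJstar]
  have hrealkey := UPSL.key V (J V) hVV hJVV d (fun j => starRingEnd ℂ (d j)) f hMc2
  have hfdc : ∀ j, f (starRingEnd ℂ (d j)) = starRingEnd ℂ ((θ j : ℂ) * Complex.I) := by
    intro j
    have h9 : starRingEnd ℂ (d j) = Complex.exp (((-θ j : ℝ) : ℂ) * Complex.I) := by
      rw [← hexpd j, ← Complex.exp_conj]
      congr 1
      simp [Complex.conj_ofReal]
    rw [hfdef]
    simp only
    rw [h9, hargθ _ (by linarith [(hθlt j).1]) (by linarith [(hθlt j).2])]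
    simp [Complex.conj_ofReal]
  have hXcJ : Xc = J Xc := by
    have e2 : diagonal (fun j => f (starRingEnd ℂ (d j))) = J D' := by
      rw [hD'def, hJdiag]
      exact diagonal_eq_diagonal_iff.mpr fun j => hfdc j
    calc Xc = V * diagonal (fun j => f (d j)) * star V := by rw [e1, hXcdef]
      _ = J V * diagonal (fun j => f (starRingEnd ℂ (d j))) * star (J V) := hrealkey
      _ = J V * J D' * J (star V) := by rw [e2, hJstar]
      _ = J Xc := by rw [hXcdef, hJmul, hJmul]
  have hXcim : ∀ i j, (Xc i j).im = 0 := by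
    intro i j
    have h10 := congrArg (fun Z : Matrix (Fin n) (Fin n) ℂ => Z i j) hXcJ
    simp only [hJdef, Matrix.map_apply] at h10
    exact Complex.conj_eq_iff_im.mp h10.symm
  set X : Matrix (Fin n) (Fin n) ℝ := Matrix.of (fun i j => (Xc i j).re) with hXdef
  have hφX : φ X = Xc := by
    rw [hφapp]
    ext i j
    apply Complex.ext
    · simp [hXdef, Matrix.map_apply]
    · simp [hXdef, Matrix.map_apply, hXcim i j]
  -- skewness
  have hD'star : star D' = -D' := by
    rw [hD'def, Matrix.star_eq_conjTranspose, diagonal_conjTranspose,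
      show (star fun j => (θ j : ℂ) * Complex.I) = fun j => -((θ j : ℂ) * Complex.I) from
        funext fun j => by simp [Pi.star_apply, Complex.conj_ofReal],
      diagonal_neg]
  have hXcskew : Xcᴴ = -Xc := by
    calc Xcᴴ = star Xc := (Matrix.star_eq_conjTranspose Xc).symm
      _ = V * (star D' * star V) := by rw [hXcdef, Matrix.star_mul, star_star, Matrix.star_mul]
      _ = -Xc := by rw [hD'star, neg_mul, mul_neg, hXcdef, mul_assoc]
  have hXskew : Xᵀ = -X := by
    ext i j
    have h11 := congrArg (fun Z : Matrix (Fin n) (Fin n) ℂ => Z i j) hXcskew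
    simp only [conjTranspose_apply, Matrix.neg_apply] at h11
    have h12 := congrArg Complex.re h11
    simpa [hXdef, Matrix.transpose_apply, Matrix.neg_apply] using h12
  -- the exponential
  letI : SeminormedRing (Matrix (Fin n) (Fin n) ℝ) := Matrix.linftyOpSemiNormedRing
  letI : NormedRing (Matrix (Fin n) (Fin n) ℝ) := Matrix.linftyOpNormedRing
  letI : NormedAlgebra ℝ (Matrix (Fin n) (Fin n) ℝ) := Matrix.linftyOpNormedAlgebra
  letI : SeminormedRing (Matrix (Fin n) (Fin n) ℂ) := Matrix.linftyOpSemiNormedRing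
  letI : NormedRing (Matrix (Fin n) (Fin n) ℂ) := Matrix.linftyOpNormedRing
  letI : NormedAlgebra ℝ (Matrix (Fin n) (Fin n) ℂ) := Matrix.linftyOpNormedAlgebra
  have hφcont : Continuous (⇑φ) := by
    have hco : (⇑φ : Matrix (Fin n) (Fin n) ℝ → Matrix (Fin n) (Fin n) ℂ)
        = fun P => P.map (fun x : ℝ => (x : ℂ)) := funext fun P => hφapp P
    rw [hco]
    exact Continuous.matrix_map continuous_id Complex.continuous_ofReal
  have hmapexp : ∀ P : Matrix (Fin n) (Fin n) ℝ,
      φ (NormedSpace.exp P) = NormedSpace.exp (φ P) := fun P => by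
        letI : NormedAlgebra ℚ (Matrix (Fin n) (Fin n) ℝ) := NormedAlgebra.restrictScalars ℚ ℝ _
        letI : NormedAlgebra ℚ (Matrix (Fin n) (Fin n) ℂ) := NormedAlgebra.restrictScalars ℚ ℝ _
        exact map_exp φ hφcont P
  have hVunit : IsUnit V := ⟨⟨V, star V, hVV, hV'V⟩, rfl⟩
  have hVinv : V⁻¹ = star V := Matrix.inv_eq_right_inv hVV
  have hexpXc : NormedSpace.exp Xc = Mc := by
    rw [hXcdef, ← hVinv, Matrix.exp_conj V D' hVunit, hD'def,
      Matrix.exp_diagonal, hVinv]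
    have e3 : (NormedSpace.exp (fun j => (θ j : ℂ) * Complex.I) : Fin n → ℂ) = d := by
      funext j
      rw [Pi.coe_exp, ← Complex.exp_eq_exp_ℂ, hexpd j]
    rw [e3, ← hMcV]
  have hexpX : NormedSpace.exp X = M := by
    apply hφinj
    rw [hmapexp X, hφX, hexpXc, hMcdef]
  -- the spectrum of Xc
  have hspecX : ∀ μ ∈ spectrum ℂ (X.map (fun x : ℝ => (x : ℂ))),
      μ.im ∈ Set.Icc (-Real.pi) Real.pi := by
    intro μ hμ
    rw [← hφapp, hφX, hXcdef, UPSL.spec_conj V D' hVV, hD'def] at hμ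
    obtain ⟨j, hj⟩ := (UPSL.spec_diag _ μ).mp hμ
    rw [← hj]
    simp only [Complex.mul_im, Complex.I_re, Complex.I_im, Complex.ofReal_re, Complex.ofReal_im,
      mul_zero, mul_one, zero_mul, add_zero, zero_add]
    exact ⟨(hθlt j).2.le, (hθlt j).1.le⟩
  refine ⟨X, ⟨hXskew, hexpX, hspecX⟩, ?_⟩
  -- uniqueness
  intro Y hY
  obtain ⟨hYskew, hYexp, hYspec⟩ := hY
  set Yc : Matrix (Fin n) (Fin n) ℂ := φ Y with hYcdef
  have hYcstar : star Yc = -Yc := by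
    rw [hYcdef, hstarφ, hYskew, map_neg]
  set H : Matrix (Fin n) (Fin n) ℂ := (-Complex.I) • Yc with hHdef
  have hHherm : Matrix.IsHermitian H := by
    show Hᴴ = H
    rw [hHdef, conjTranspose_smul, ← Matrix.star_eq_conjTranspose, hYcstar]
    simp
  set W : Matrix (Fin n) (Fin n) ℂ := (hHherm.eigenvectorUnitary : Matrix (Fin n) (Fin n) ℂ)
    with hWdef
  set s : Fin n → ℝ := hHherm.eigenvalues with hsdef
  have hWu : W ∈ Matrix.unitaryGroup (Fin n) ℂ := hHherm.eigenvectorUnitary.2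
  have hWW : W * star W = 1 := (Matrix.mem_unitaryGroup_iff).mp hWu
  have hHspec : H = W * diagonal (fun j => (s j : ℂ)) * star W := by
    have h := hHherm.spectral_theorem
    rw [show (RCLike.ofReal ∘ hHherm.eigenvalues : Fin n → ℂ) = fun j => (s j : ℂ) from rfl] at h
    exact h
  have hYcW : Yc = W * diagonal (fun j => (s j : ℂ) * Complex.I) * star W := by
    have h13 : Yc = Complex.I • H := by
      rw [hHdef, smul_smul]
      simp [Complex.I_mul_I]
    rw [h13, hHspec,
      show Complex.I • ((W * diagonal fun j => (s j : ℂ)) * star W)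
        = (W * (Complex.I • diagonal fun j => (s j : ℂ))) * star W from by
          rw [Matrix.mul_smul, Matrix.smul_mul],
      ← diagonal_smul,
      show (Complex.I • fun j => (s j : ℂ)) = fun j => (s j : ℂ) * Complex.I from
        funext fun j => by simp [mul_comm]]
  have hexpYc : NormedSpace.exp Yc = Mc := by
    rw [hYcdef, ← hmapexp Y, hYexp, hMcdef]
  have hW'W : star W * W = 1 := (Matrix.mem_unitaryGroup_iff').mp hWu
  have hWunit : IsUnit W := ⟨⟨W, star W, hWW, hW'W⟩, rfl⟩
  have hWinv : W⁻¹ = star W := Matrix.inv_eq_right_inv hWW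
  have hMcW : Mc = W * diagonal (fun j => Complex.exp ((s j : ℂ) * Complex.I)) * star W := by
    rw [← hexpYc, hYcW, ← hWinv, Matrix.exp_conj W _ hWunit,
      Matrix.exp_diagonal, hWinv]
    have e6 : (NormedSpace.exp (fun j => (s j : ℂ) * Complex.I) : Fin n → ℂ)
        = fun j => Complex.exp ((s j : ℂ) * Complex.I) := by
      funext j
      rw [Pi.coe_exp, ← Complex.exp_eq_exp_ℂ]
    rw [e6]
  have hsIcc : ∀ j, s j ∈ Set.Icc (-Real.pi) Real.pi := by
    intro j
    have hmem : (s j : ℂ) * Complex.I ∈ spectrum ℂ (Y.map fun x : ℝ => (x : ℂ)) := by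
      rw [← hφapp, ← hYcdef, hYcW, UPSL.spec_conj _ _ hWW]
      exact (UPSL.spec_diag _ _).mpr ⟨j, rfl⟩
    have h14 := hYspec _ hmem
    simpa using h14
  have hsne : ∀ j, s j ≠ Real.pi ∧ s j ≠ -Real.pi := by
    intro j
    have hmem2 : Complex.exp ((s j : ℂ) * Complex.I) ∈ spectrum ℂ Mc := by
      rw [hMcW, UPSL.spec_conj _ _ hWW]
      exact (UPSL.spec_diag _ _).mpr ⟨j, rfl⟩
    have hne : Complex.exp ((s j : ℂ) * Complex.I) ≠ -1 := by
      intro h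
      rw [h] at hmem2
      exact hnegMc hmem2
    constructor
    · intro h
      apply hne
      rw [h]
      exact Complex.exp_pi_mul_I
    · intro h
      apply hne
      rw [h]
      push_cast
      rw [neg_mul, Complex.exp_neg, Complex.exp_pi_mul_I]
      norm_num
  have hsIoo : ∀ j, -Real.pi < s j ∧ s j < Real.pi := fun j =>
    ⟨lt_of_le_of_ne (hsIcc j).1 (Ne.symm (hsne j).2), lt_of_le_of_ne (hsIcc j).2 (hsne j).1⟩
  have hfs : ∀ j, f (Complex.exp ((s j : ℂ) * Complex.I)) = (s j : ℂ) * Complex.I := by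
    intro j
    rw [hfdef]
    simp only
    rw [hargθ _ (hsIoo j).1 (hsIoo j).2.le]
  have hkey2 := UPSL.key V W hVV hWW d (fun j => Complex.exp ((s j : ℂ) * Complex.I)) f
    (by rw [← hMcV, ← hMcW])
  have hXcYc : Xc = Yc := by
    have e5 : diagonal (fun j => f (Complex.exp ((s j : ℂ) * Complex.I)))
        = diagonal (fun j => (s j : ℂ) * Complex.I) := by
      rw [show (fun j => f (Complex.exp ((s j : ℂ) * Complex.I)))
        = fun j => (s j : ℂ) * Complex.I from funext fun j => hfs j]
    calc Xc = V * diagonal (fun j => f (d j)) * star V := by rw [e1, hXcdef]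
      _ = W * diagonal (fun j => f (Complex.exp ((s j : ℂ) * Complex.I))) * star W := hkey2
      _ = Yc := by rw [e5, ← hYcW]
  apply hφinj
  rw [hφX, ← hYcdef, hXcYc]
end
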